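/- arXiv:1903.02877 — 5 statements merged into one kernel-verified Lean document; each statement's English description precedes it below -/
import Mathlib

section
/- For every natural number n and every real number x, x^n = Σ_{k=0}^{n} S_B(n,k) · [x]^B_k, where [x]^B_k = (x-1)(x-3)⋯(x-2k+1) and [x]^B_0 = 1. -/
open Finset

/-- The set `[±n] = {±1, …, ±n}` as a finset of integers. -/
noncomputable def pmSet (n : ℕ) : Finset ℤ := (Finset.Icc (-(n:ℤ)) (n:ℤ)).erase 0

/-- Negation of a set: `-C`. -/
def negSet (C : Finset ℤ) : Finset ℤ := C.image (fun x => -x)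

/-- A signed partition of `[±n]`: a set partition of `[±n]` closed under block
negation, with at most one self-negative block (the zero-block). -/
def IsSignedPartition (n : ℕ) (P : Finpartition (pmSet n)) : Prop :=
  (∀ C ∈ P.parts, negSet C ∈ P.parts) ∧
  (P.parts.filter (fun C => negSet C = C)).card ≤ 1

/-- `SB n k`: the type-B Stirling number of the second kind, i.e. the number of
signed partitions of `[±n]` with exactly `k` pairs of nonzero blocks. -/
noncomputable def SB (n k : ℕ) : ℕ :=
  Nat.card {P : Finpartition (pmSet n) //
    IsSignedPartition n P ∧ (P.parts.filter (fun C => negSet C ≠ C)).card = 2 * k}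

lemma mem_pmSet {n : ℕ} {x : ℤ} : x ∈ pmSet n ↔ x ≠ 0 ∧ |x| ≤ n := by
  simp [pmSet, abs_le, and_comm]

lemma neg_mem_pmSet {n : ℕ} {x : ℤ} (h : x ∈ pmSet n) : -x ∈ pmSet n := by
  rw [mem_pmSet] at h ⊢; simpa using h

lemma mem_negSet {C : Finset ℤ} {y : ℤ} : y ∈ negSet C ↔ -y ∈ C := by
  simp only [negSet, mem_image]
  constructor
  · rintro ⟨x, hx, rfl⟩; simpa
  · intro h; exact ⟨-y, h, by ring⟩

lemma negSet_negSet (C : Finset ℤ) : negSet (negSet C) = C := by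
  ext y; simp [mem_negSet]

lemma negSet_image_abs (C : Finset ℤ) : (negSet C).image abs = C.image abs := by
  ext y; simp only [mem_image]
  constructor
  · rintro ⟨x, hx, rfl⟩; exact ⟨-x, mem_negSet.mp hx, by simp⟩
  · rintro ⟨x, hx, rfl⟩; exact ⟨-x, by simp [mem_negSet, hx], by simp⟩

lemma negSet_subset {C D : Finset ℤ} (h : C ⊆ D) : negSet C ⊆ negSet D := by
  intro y hy; rw [mem_negSet] at *; exact h hy

/-- minimal absolute value occurring in `C` -/
noncomputable def minA (C : Finset ℤ) : ℤ := ((C.image abs).min).untopD 0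

noncomputable def minrep (C : Finset ℤ) : ℤ := if minA C ∈ C then minA C else -(minA C)

lemma minA_mem {C : Finset ℤ} (h : C.Nonempty) : minA C ∈ C.image abs := by
  have hne : (C.image abs).Nonempty := h.image _
  have : minA C = (C.image abs).min' hne := by
    rw [minA, ← Finset.coe_min' hne]; rfl
  rw [this]; exact Finset.min'_mem _ _

lemma minA_le {C : Finset ℤ} {y : ℤ} (hy : y ∈ C) : minA C ≤ |y| := by
  have hne : (C.image abs).Nonempty := ⟨|y|, Finset.mem_image_of_mem _ hy⟩
  have : minA C = (C.image abs).min' hne := by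
    rw [minA, ← Finset.coe_min' hne]; rfl
  rw [this]; exact Finset.min'_le _ _ (Finset.mem_image_of_mem _ hy)

lemma minA_pos {n : ℕ} {C : Finset ℤ} (hC : C ⊆ pmSet n) (h : C.Nonempty) : 0 < minA C := by
  obtain ⟨y, hy, hyA⟩ := Finset.mem_image.mp (minA_mem h)
  have : y ≠ 0 := (mem_pmSet.mp (hC hy)).1
  rw [← hyA]; exact abs_pos.mpr this

lemma minA_negSet (C : Finset ℤ) : minA (negSet C) = minA C := by
  rw [minA, minA, negSet_image_abs]

lemma mem_or_neg_mem_of_minA {C : Finset ℤ} (h : C.Nonempty) :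
    minA C ∈ C ∨ -(minA C) ∈ C := by
  obtain ⟨y, hy, hyA⟩ := Finset.mem_image.mp (minA_mem h)
  rcases abs_choice y with h1 | h1
  · left; rwa [← hyA, h1]
  · right; rw [← hyA, h1, neg_neg]; exact hy

section parts
variable {n : ℕ} {P : Finpartition (pmSet n)} (hP : IsSignedPartition n P)

lemma part_neg (hP : IsSignedPartition n P) {x : ℤ} (hx : x ∈ pmSet n) :
    P.part (-x) = negSet (P.part x) := by
  refine P.part_eq_of_mem (hP.1 _ ((P.part_mem.mpr hx))) ?_
  rw [mem_negSet, neg_neg]; exact P.mem_part hx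

lemma not_both (hP : IsSignedPartition n P) {C : Finset ℤ} (hC : C ∈ P.parts)
    (hne : negSet C ≠ C) : ¬(minA C ∈ C ∧ -(minA C) ∈ C) := by
  rintro ⟨h1, h2⟩
  apply hne
  refine P.eq_of_mem_parts (hP.1 _ hC) hC ?_ h1
  rw [mem_negSet]; exact h2

lemma minrep_mem {C : Finset ℤ} (hC : C ∈ P.parts) : minrep C ∈ C := by
  rw [minrep]
  split
  · assumption
  · rcases mem_or_neg_mem_of_minA (P.nonempty_of_mem_parts hC) with h | h
    · exact absurd h (by assumption)
    · exact h

lemma abs_minrep {C : Finset ℤ} (hC : C ∈ P.parts) : |minrep C| = minA C := by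
  have h0 : 0 < minA C := minA_pos (P.le hC) (P.nonempty_of_mem_parts hC)
  rw [minrep]
  split
  · exact abs_of_pos h0
  · rw [abs_neg]; exact abs_of_pos h0

lemma minrep_negSet (hP : IsSignedPartition n P) {C : Finset ℤ} (hC : C ∈ P.parts)
    (hne : negSet C ≠ C) : minrep (negSet C) = -(minrep C) := by
  have hnb := not_both hP hC hne
  have hmm := minA_negSet C
  rw [minrep, minrep, hmm]
  by_cases h1 : minA C ∈ C
  · have h2 : -(minA C) ∉ C := fun h => hnb ⟨h1, h⟩
    rw [if_pos h1, if_neg (by rw [mem_negSet]; exact h2)]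
  · have h2 : -(minA C) ∈ C := by
      rcases mem_or_neg_mem_of_minA (P.nonempty_of_mem_parts hC) with h | h
      · exact absurd h h1
      · exact h
    rw [if_neg h1, if_pos (by rw [mem_negSet]; exact h2), neg_neg]

end parts

noncomputable def sigmaOf (n : ℕ) (P : Finpartition (pmSet n)) : ℤ → ℤ := fun x =>
  if hx : x ∈ pmSet n then
    (if negSet (P.part x) = P.part x then 0 else minrep (P.part x)) else 0

def SValid (n : ℕ) (σ : ℤ → ℤ) : Prop :=
  (∀ x, x ∉ pmSet n → σ x = 0) ∧ (∀ x, σ (-x) = -σ x) ∧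
  (∀ x ∈ pmSet n, σ x = 0 ∨ (|σ x| ≤ |x| ∧ σ |σ x| = |σ x|))

lemma negSet_inj {C D : Finset ℤ} (h : negSet C = negSet D) : C = D := by
  rw [← negSet_negSet C, h, negSet_negSet]

lemma sigmaOf_spec_mem {n : ℕ} {P : Finpartition (pmSet n)} {x : ℤ} (hx : x ∈ pmSet n) :
    sigmaOf n P x = if negSet (P.part x) = P.part x then 0 else minrep (P.part x) := by
  rw [sigmaOf, dif_pos hx]

lemma sigmaOf_valid {n : ℕ} {P : Finpartition (pmSet n)} (hP : IsSignedPartition n P) :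
    SValid n (sigmaOf n P) := by
  refine ⟨fun x hx => by rw [sigmaOf, dif_neg hx], ?_, ?_⟩
  · intro x
    by_cases hx : x ∈ pmSet n
    · have hx' : -x ∈ pmSet n := neg_mem_pmSet hx
      rw [sigmaOf_spec_mem hx', sigmaOf_spec_mem hx, part_neg hP hx]
      by_cases hself : negSet (P.part x) = P.part x
      · rw [if_pos hself, if_pos (by rw [hself]; exact hself), neg_zero]
      · have hself' : negSet (negSet (P.part x)) ≠ negSet (P.part x) :=
          fun h => hself (negSet_inj h)
        rw [if_neg hself, if_neg hself', minrep_negSet hP ((P.part_mem.mpr hx)) hself]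
    · have hx' : -x ∉ pmSet n := fun h => hx (by simpa using neg_mem_pmSet h)
      rw [sigmaOf, sigmaOf, dif_neg hx, dif_neg hx', neg_zero]
  · intro x hx
    rw [sigmaOf_spec_mem hx]
    by_cases hself : negSet (P.part x) = P.part x
    · left; rw [if_pos hself]
    · right
      rw [if_neg hself]
      have hCmem := (P.part_mem.mpr hx)
      have habs := abs_minrep (P := P) hCmem
      have hmle : minA (P.part x) ≤ |x| := minA_le (P.mem_part hx)
      refine ⟨by rw [habs]; exact hmle, ?_⟩
      rw [habs]
      set C := P.part x with hC
      set m := minA C with hm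
      have hmpos : 0 < m := minA_pos (P.le hCmem) (P.nonempty_of_mem_parts hCmem)
      have hmn : m ∈ pmSet n := by
        rw [mem_pmSet]
        refine ⟨hmpos.ne', ?_⟩
        rw [abs_of_pos hmpos]
        exact hmle.trans (mem_pmSet.mp hx).2
      by_cases h1 : m ∈ C
      · have : P.part m = C := P.part_eq_of_mem hCmem h1
        rw [sigmaOf_spec_mem hmn, this, if_neg hself, minrep, if_pos (hm ▸ h1)]
      · have h2 : -m ∈ C := by
          rcases mem_or_neg_mem_of_minA (P.nonempty_of_mem_parts hCmem) with h | h
          · exact absurd (hm ▸ h) h1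
          · exact hm ▸ h
        have hpm : P.part m = negSet C :=
          P.part_eq_of_mem (hP.1 _ hCmem) (by rw [mem_negSet]; exact h2)
        have hself' : negSet (negSet C) ≠ negSet C :=
          fun h => hself (negSet_inj h)
        rw [sigmaOf_spec_mem hmn, hpm, if_neg hself', minrep_negSet hP hCmem hself,
          minrep, if_neg (hm ▸ h1), neg_neg]

noncomputable def sfix (n : ℕ) (σ : ℤ → ℤ) : ℕ :=
  ((Finset.Icc (1:ℤ) (n:ℤ)).filter (fun x => σ x = x)).card

lemma filter_fix_card {n : ℕ} {σ : ℤ → ℤ} (hv : SValid n σ) :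
    ((pmSet n).filter (fun x => σ x = x)).card = 2 * sfix n σ := by
  classical
  set F := (Finset.Icc (1:ℤ) (n:ℤ)).filter (fun x => σ x = x) with hF
  have hFsub : F ⊆ (pmSet n).filter (fun x => σ x = x) := by
    intro x hx
    simp only [hF, Finset.mem_filter, Finset.mem_Icc] at hx
    exact Finset.mem_filter.mpr ⟨mem_pmSet.mpr ⟨by omega, by rw [abs_le]; omega⟩, hx.2⟩
  have himg : (pmSet n).filter (fun x => σ x = x) = F ∪ F.image (fun x => -x) := by
    ext x
    simp only [Finset.mem_union, Finset.mem_image]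
    constructor
    · intro hx
      obtain ⟨hxp, hxf⟩ := Finset.mem_filter.mp hx
      obtain ⟨hx0, hxn⟩ := mem_pmSet.mp hxp
      rcases lt_or_gt_of_ne hx0 with h | h
      · right
        refine ⟨-x, ?_, by ring⟩
        simp only [hF, Finset.mem_filter, Finset.mem_Icc]
        rw [abs_le] at hxn
        refine ⟨⟨by omega, by omega⟩, ?_⟩
        rw [hv.2.1 x, hxf]
      · left
        simp only [hF, Finset.mem_filter, Finset.mem_Icc]
        rw [abs_le] at hxn
        exact ⟨⟨by omega, by omega⟩, hxf⟩
    · rintro (hx | ⟨y, hy, rfl⟩)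
      · exact hFsub hx
      · obtain ⟨hyp, hyf⟩ := Finset.mem_filter.mp (hFsub hy)
        refine Finset.mem_filter.mpr ⟨neg_mem_pmSet hyp, ?_⟩
        rw [hv.2.1 y, hyf]
  have hdisj : Disjoint F (F.image (fun x => -x)) := by
    rw [Finset.disjoint_left]
    intro x hx1 hx2
    obtain ⟨y, hy, rfl⟩ := Finset.mem_image.mp hx2
    simp only [hF, Finset.mem_filter, Finset.mem_Icc] at hx1 hy
    omega
  rw [himg, Finset.card_union_of_disjoint hdisj,
    Finset.card_image_of_injective _ neg_injective, sfix, two_mul]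

lemma parts_card_eq {n : ℕ} {P : Finpartition (pmSet n)} (hP : IsSignedPartition n P) :
    (P.parts.filter (fun C => negSet C ≠ C)).card = 2 * sfix n (sigmaOf n P) := by
  classical
  rw [← filter_fix_card (sigmaOf_valid hP)]
  apply Finset.card_bij (fun C _ => minrep C)
  · intro C hC
    obtain ⟨hCp, hCne⟩ := Finset.mem_filter.mp hC
    have hmem : minrep C ∈ C := minrep_mem hCp
    have hmempm : minrep C ∈ pmSet n := P.le hCp hmem
    refine Finset.mem_filter.mpr ⟨hmempm, ?_⟩
    have : P.part (minrep C) = C := P.part_eq_of_mem hCp hmem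
    rw [sigmaOf_spec_mem hmempm, this, if_neg hCne]
  · intro C hC D hD h
    obtain ⟨hCp, _⟩ := Finset.mem_filter.mp hC
    obtain ⟨hDp, _⟩ := Finset.mem_filter.mp hD
    exact P.eq_of_mem_parts hCp hDp (minrep_mem hCp) (h ▸ minrep_mem hDp)
  · intro x hx
    obtain ⟨hxp, hxf⟩ := Finset.mem_filter.mp hx
    have hC := (P.part_mem.mpr hxp)
    have hne : negSet (P.part x) ≠ P.part x := by
      intro h
      rw [sigmaOf_spec_mem hxp, if_pos h] at hxf
      exact (mem_pmSet.mp hxp).1 hxf.symm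
    refine ⟨P.part x, Finset.mem_filter.mpr ⟨hC, hne⟩, ?_⟩
    rw [sigmaOf_spec_mem hxp, if_neg hne] at hxf
    exact hxf

noncomputable def fiber (n : ℕ) (σ : ℤ → ℤ) (x : ℤ) : Finset ℤ :=
  (pmSet n).filter (fun y => σ y = σ x)

noncomputable def partOf (n : ℕ) (σ : ℤ → ℤ) : Finpartition (pmSet n) where
  parts := (pmSet n).image (fiber n σ)
  supIndep := by
    rw [Finset.supIndep_iff_pairwiseDisjoint]
    intro a ha b hb hab
    simp only [Finset.coe_image, Set.mem_image] at ha hb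
    obtain ⟨x, hx, rfl⟩ := ha
    obtain ⟨y, hy, rfl⟩ := hb
    simp only [Function.onFun, id]
    rw [Finset.disjoint_left]
    intro z hz1 hz2
    apply hab
    simp only [fiber, Finset.mem_filter] at hz1 hz2
    have : σ x = σ y := hz1.2 ▸ hz2.2
    simp only [id, fiber, this]
  sup_parts := by
    apply le_antisymm
    · apply Finset.sup_le
      intro C hC
      obtain ⟨x, _, rfl⟩ := Finset.mem_image.mp hC
      exact Finset.filter_subset _ _
    · intro x hx
      rw [Finset.mem_sup]
      exact ⟨fiber n σ x, Finset.mem_image_of_mem _ hx,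
        Finset.mem_filter.mpr ⟨hx, rfl⟩⟩
  bot_notMem := by
    intro h
    obtain ⟨x, hx, hfx⟩ := Finset.mem_image.mp h
    have : x ∈ fiber n σ x := Finset.mem_filter.mpr ⟨hx, rfl⟩
    rw [hfx] at this
    exact absurd this (Finset.notMem_empty x)

lemma negSet_fiber {n : ℕ} {σ : ℤ → ℤ} (hv : SValid n σ) (x : ℤ) :
    negSet (fiber n σ x) = fiber n σ (-x) := by
  ext y
  simp only [mem_negSet, fiber, Finset.mem_filter]
  constructor
  · rintro ⟨hy, hs⟩
    refine ⟨by simpa using neg_mem_pmSet hy, ?_⟩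
    have h1 : -σ y = σ x := by rw [← hv.2.1 y]; exact hs
    rw [hv.2.1 x, ← h1, neg_neg]
  · rintro ⟨hy, hs⟩
    refine ⟨neg_mem_pmSet hy, ?_⟩
    rw [hv.2.1 y, hs, hv.2.1 x, neg_neg]

lemma fiber_congr {n : ℕ} {σ : ℤ → ℤ} {a b : ℤ} (h : σ a = σ b) :
    fiber n σ a = fiber n σ b := by
  simp only [fiber, h]

lemma mem_fiber_self {n : ℕ} {σ : ℤ → ℤ} {x : ℤ} (hx : x ∈ pmSet n) :
    x ∈ fiber n σ x := Finset.mem_filter.mpr ⟨hx, rfl⟩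

lemma partOf_part {n : ℕ} {σ : ℤ → ℤ} {x : ℤ} (hx : x ∈ pmSet n) :
    (partOf n σ).part x = fiber n σ x :=
  Finpartition.part_eq_of_mem _ (Finset.mem_image_of_mem _ hx) (mem_fiber_self hx)

lemma partOf_signed {n : ℕ} {σ : ℤ → ℤ} (hv : SValid n σ) :
    IsSignedPartition n (partOf n σ) := by
  constructor
  · intro C hC
    obtain ⟨x, hx, rfl⟩ := Finset.mem_image.mp hC
    rw [negSet_fiber hv]
    exact Finset.mem_image_of_mem _ (neg_mem_pmSet hx)
  · rw [Finset.card_le_one]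
    intro C hC D hD
    obtain ⟨hC1, hC2⟩ := Finset.mem_filter.mp hC
    obtain ⟨hD1, hD2⟩ := Finset.mem_filter.mp hD
    obtain ⟨x, hx, rfl⟩ := Finset.mem_image.mp hC1
    obtain ⟨y, hy, rfl⟩ := Finset.mem_image.mp hD1
    have h0 : ∀ z : ℤ, z ∈ pmSet n → negSet (fiber n σ z) = fiber n σ z → σ z = 0 := by
      intro z hz h
      rw [negSet_fiber hv] at h
      have : z ∈ fiber n σ (-z) := h ▸ mem_fiber_self hz
      have h2 : σ z = σ (-z) := (Finset.mem_filter.mp this).2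
      rw [hv.2.1 z] at h2
      omega
    exact fiber_congr ((h0 x hx hC2).trans (h0 y hy hD2).symm)

lemma sigmaOf_partOf {n : ℕ} {σ : ℤ → ℤ} (hv : SValid n σ) :
    sigmaOf n (partOf n σ) = σ := by
  funext x
  by_cases hx : x ∈ pmSet n
  · rw [sigmaOf_spec_mem hx, partOf_part hx]
    by_cases h0 : σ x = 0
    · rw [if_pos, h0]
      rw [negSet_fiber hv]
      apply fiber_congr
      rw [hv.2.1 x, h0, neg_zero]
    · have habs : |σ x| ≤ |x| ∧ σ |σ x| = |σ x| := by
        rcases hv.2.2 x hx with h | h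
        · exact absurd h h0
        · exact h
      have hvn : σ (σ x) = σ x := by
        rcases abs_choice (σ x) with h | h
        · rw [← h]; exact habs.2
        · have := habs.2
          rw [h] at this
          have h2 := hv.2.1 (σ x)
          omega
      have hself : negSet (fiber n σ x) ≠ fiber n σ x := by
        intro h
        rw [negSet_fiber hv] at h
        have : x ∈ fiber n σ (-x) := h ▸ mem_fiber_self hx
        have h2 : σ x = σ (-x) := (Finset.mem_filter.mp this).2
        rw [hv.2.1 x] at h2
        omega
      rw [if_neg hself]
      -- minrep (fiber x) = σ x
      have hvpm : σ x ∈ pmSet n := by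
        rw [mem_pmSet]
        exact ⟨h0, habs.1.trans (mem_pmSet.mp hx).2⟩
      have hvfib : σ x ∈ fiber n σ x := Finset.mem_filter.mpr ⟨hvpm, hvn⟩
      have hminA : minA (fiber n σ x) = |σ x| := by
        apply le_antisymm (minA_le hvfib)
        obtain ⟨y, hy, hyA⟩ := Finset.mem_image.mp (minA_mem (C := fiber n σ x) ⟨x, mem_fiber_self hx⟩)
        obtain ⟨hy1, hy2⟩ := Finset.mem_filter.mp hy
        have : σ y ≠ 0 := by rw [hy2]; exact h0
        have h3 : |σ y| ≤ |y| := by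
          rcases hv.2.2 y hy1 with h | h
          · exact absurd h this
          · exact h.1
        rw [← hyA, ← hy2]
        exact h3
      rw [minrep, hminA]
      rcases abs_choice (σ x) with h | h
      · rw [if_pos (show |σ x| ∈ fiber n σ x by rw [h]; exact hvfib), h]
      · have hnot : |σ x| ∉ fiber n σ x := by
          intro hmem
          have h2 : σ |σ x| = σ x := (Finset.mem_filter.mp hmem).2
          rw [habs.2] at h2
          have : σ x < 0 := by
            rcases lt_trichotomy (σ x) 0 with h' | h' | h'
            · exact h'
            · exact absurd h' h0
            · omega
          omega
        rw [if_neg hnot, h, neg_neg]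
  · rw [sigmaOf, dif_neg hx, (hv.1 x hx).symm]

lemma partOf_sigmaOf {n : ℕ} {P : Finpartition (pmSet n)} (hP : IsSignedPartition n P) :
    partOf n (sigmaOf n P) = P := by
  set σ := sigmaOf n P with hσ
  have hfib : ∀ x ∈ pmSet n, fiber n σ x = P.part x := by
    intro x hx
    ext y
    simp only [fiber, Finset.mem_filter]
    constructor
    · rintro ⟨hy, hs⟩
      by_cases h0 : σ x = 0
      · have hselfx : negSet (P.part x) = P.part x := by
          by_contra h
          rw [hσ, sigmaOf_spec_mem hx, if_neg h] at h0
          have := minrep_mem (P := P) ((P.part_mem.mpr hx))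
          rw [h0] at this
          exact (mem_pmSet.mp (P.le ((P.part_mem.mpr hx)) this)).1 rfl
        have hselfy : negSet (P.part y) = P.part y := by
          by_contra h
          have h0y : σ y = 0 := hs.trans h0
          rw [hσ, sigmaOf_spec_mem hy, if_neg h] at h0y
          have := minrep_mem (P := P) ((P.part_mem.mpr hy))
          rw [h0y] at this
          exact (mem_pmSet.mp (P.le ((P.part_mem.mpr hy)) this)).1 rfl
        have heq : P.part y = P.part x := by
          have := Finset.card_le_one.mp hP.2
          exact this _ (Finset.mem_filter.mpr ⟨(P.part_mem.mpr hy), hselfy⟩)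
            _ (Finset.mem_filter.mpr ⟨(P.part_mem.mpr hx), hselfx⟩)
        exact heq ▸ P.mem_part hy
      · have hselfx : negSet (P.part x) ≠ P.part x := by
          intro h
          rw [hσ, sigmaOf_spec_mem hx, if_pos h] at h0
          exact h0 rfl
        have h0y : σ y ≠ 0 := by rw [hs]; exact h0
        have hselfy : negSet (P.part y) ≠ P.part y := by
          intro h
          rw [hσ, sigmaOf_spec_mem hy, if_pos h] at h0y
          exact h0y rfl
        have hsx : σ x = minrep (P.part x) := by rw [hσ, sigmaOf_spec_mem hx, if_neg hselfx]
        have hsy : σ y = minrep (P.part y) := by rw [hσ, sigmaOf_spec_mem hy, if_neg hselfy]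
        have : minrep (P.part y) = minrep (P.part x) := by rw [← hsy, ← hsx, hs]
        have heq : P.part y = P.part x :=
          P.eq_of_mem_parts ((P.part_mem.mpr hy)) ((P.part_mem.mpr hx))
            (minrep_mem ((P.part_mem.mpr hy))) (by rw [this]; exact minrep_mem ((P.part_mem.mpr hx)))
        exact heq ▸ P.mem_part hy
    · intro hy
      have hy' : y ∈ pmSet n := P.le ((P.part_mem.mpr hx)) hy
      have heq : P.part y = P.part x := P.part_eq_of_mem ((P.part_mem.mpr hx)) hy
      refine ⟨hy', ?_⟩
      rw [hσ, sigmaOf_spec_mem hy', sigmaOf_spec_mem hx, heq]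
  ext C
  constructor
  · intro hC
    obtain ⟨x, hx, rfl⟩ := Finset.mem_image.mp hC
    rw [hfib x hx]
    exact (P.part_mem.mpr hx)
  · intro hC
    obtain ⟨x, hx⟩ := P.nonempty_of_mem_parts hC
    have hx' : x ∈ pmSet n := P.le hC hx
    have : C = fiber n σ x := by rw [hfib x hx', P.part_eq_of_mem hC hx]
    rw [this]
    exact Finset.mem_image_of_mem _ hx'

def SVk (n k : ℕ) : Type := {σ : ℤ → ℤ // SValid n σ ∧ sfix n σ = k}

instance SVk.finite (n k : ℕ) : Finite (SVk n k) := by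
  let f : SVk n k → (pmSet n → Finset.Icc (-(n:ℤ)) (n:ℤ)) := fun σ x =>
    ⟨σ.1 x.1, by
      rcases σ.2.1.2.2 x.1 x.2 with h | h
      · simp [h]
      · have hx : |(x.1 : ℤ)| ≤ n := (mem_pmSet.mp x.2).2
        have := h.1.trans hx
        rw [abs_le] at this
        simp [Finset.mem_Icc, this.1, this.2]⟩
  have hf : Function.Injective f := by
    intro σ τ h
    apply Subtype.ext; funext x
    by_cases hx : x ∈ pmSet n
    · have := congrFun h ⟨x, hx⟩
      exact Subtype.mk_eq_mk.mp this
    · rw [σ.2.1.1 x hx, τ.2.1.1 x hx]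
  exact Finite.of_injective f hf

def trunc (n : ℕ) (σ : ℤ → ℤ) : ℤ → ℤ := fun x => if |x| = (n:ℤ)+1 then 0 else σ x

def extend' (n : ℕ) (v : ℤ) (σ : ℤ → ℤ) : ℤ → ℤ := fun x =>
  if x = (n:ℤ)+1 then v else if x = -((n:ℤ)+1) then -v else σ x

lemma mem_pmSet_succ {n : ℕ} {x : ℤ} :
    x ∈ pmSet (n+1) ↔ x ∈ pmSet n ∨ |x| = (n:ℤ)+1 := by
  rw [mem_pmSet, mem_pmSet]
  push_cast
  constructor
  · rintro ⟨h1, h2⟩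
    by_cases h : |x| = (n:ℤ)+1
    · right; exact h
    · left; exact ⟨h1, by omega⟩
  · rintro (⟨h1, h2⟩ | h)
    · exact ⟨h1, by omega⟩
    · have : x ≠ 0 := by intro h0; rw [h0] at h; simp at h; omega
      exact ⟨this, by omega⟩

lemma trunc_valid {n : ℕ} {σ : ℤ → ℤ} (hv : SValid (n+1) σ) : SValid n (trunc n σ) := by
  refine ⟨?_, ?_, ?_⟩
  · intro x hx
    rw [trunc]
    split
    · rfl
    · exact hv.1 x (fun h => hx (by rw [mem_pmSet_succ] at h; tauto))
  · intro x
    rw [trunc, trunc, abs_neg]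
    split
    · rw [neg_zero]
    · exact hv.2.1 x
  · intro x hx
    have hxa : |x| ≤ (n:ℤ) := (mem_pmSet.mp hx).2
    have hxne : |x| ≠ (n:ℤ)+1 := by omega
    have hx1 : x ∈ pmSet (n+1) := mem_pmSet_succ.mpr (Or.inl hx)
    rw [trunc]
    simp only [if_neg hxne]
    rcases hv.2.2 x hx1 with h | h
    · left; exact h
    · right
      refine ⟨h.1, ?_⟩
      have hne2 : |(|σ x|)| ≠ (n:ℤ)+1 := by
        rw [abs_abs]; omega
      simp only [trunc]
      rw [if_neg hne2]
      exact h.2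

lemma sfix_succ {n : ℕ} {σ : ℤ → ℤ} :
    sfix (n+1) σ = sfix n (trunc n σ) + (if σ ((n:ℤ)+1) = (n:ℤ)+1 then 1 else 0) := by
  have hIcc : Finset.Icc (1:ℤ) ((n:ℤ)+1) = insert ((n:ℤ)+1) (Finset.Icc (1:ℤ) (n:ℤ)) := by
    ext y; simp only [Finset.mem_Icc, Finset.mem_insert]; omega
  have : sfix n (trunc n σ) = ((Finset.Icc (1:ℤ) (n:ℤ)).filter (fun x => σ x = x)).card := by
    rw [sfix]
    congr 1
    apply Finset.filter_congr
    intro x hx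
    rw [Finset.mem_Icc] at hx
    rw [trunc]
    have : |x| ≠ (n:ℤ)+1 := by rw [abs_of_pos (by omega : (0:ℤ) < x)]; omega
    rw [if_neg this]
  rw [this, sfix]
  push_cast
  rw [hIcc, Finset.filter_insert]
  split
  · rw [Finset.card_insert_of_notMem (by simp only [Finset.mem_filter, Finset.mem_Icc]; omega)]
  · omega

lemma trunc_extend {n : ℕ} {v : ℤ} {σ : ℤ → ℤ} (hs : ∀ x, x ∉ pmSet n → σ x = 0) :
    trunc n (extend' n v σ) = σ := by
  funext x
  simp only [trunc, extend']
  by_cases h : |x| = (n:ℤ)+1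
  · rw [if_pos h]
    have : x ∉ pmSet n := by
      rw [mem_pmSet]; push_neg; intro _; omega
    rw [hs x this]
  · rw [if_neg h, if_neg (fun h' => h (by rw [h', abs_of_nonneg (by positivity)])),
      if_neg (fun h' => h (by rw [h', abs_neg, abs_of_nonneg (by positivity)]))]

lemma extend_trunc {n : ℕ} {σ : ℤ → ℤ} (hv : SValid (n+1) σ) :
    extend' n (σ ((n:ℤ)+1)) (trunc n σ) = σ := by
  funext x
  simp only [extend', trunc]
  by_cases h1 : x = (n:ℤ)+1
  · rw [if_pos h1, h1]
  · rw [if_neg h1]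
    by_cases h2 : x = -((n:ℤ)+1)
    · rw [if_pos h2, h2]
      have := hv.2.1 ((n:ℤ)+1)
      omega
    · rw [if_neg h2, if_neg (by intro h; rcases abs_cases x with ⟨ha, _⟩ | ⟨ha, _⟩ <;> omega)]

lemma extend_valid {n : ℕ} {v : ℤ} {σ : ℤ → ℤ} (hv : SValid n σ)
    (hvv : v = (n:ℤ)+1 ∨ v = 0 ∨ (v ≠ 0 ∧ |v| ≤ (n:ℤ) ∧ σ |v| = |v|)) :
    SValid (n+1) (extend' n v σ) := by
  set N : ℤ := (n:ℤ)+1 with hNdef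
  have hNpos : 0 < N := by omega
  have hNabs : |N| = N := abs_of_pos hNpos
  have eN : extend' n v σ N = v := by simp [extend', hNdef]
  have eNeg : extend' n v σ (-N) = -v := by
    simp only [extend']; rw [if_neg (by omega)]; simp [hNdef]
  have eOther : ∀ y : ℤ, y ≠ N → y ≠ -N → extend' n v σ y = σ y := by
    intro y h1 h2
    simp only [extend']; rw [if_neg h1, if_neg h2]
  have hpm_ne : ∀ y : ℤ, y ∈ pmSet n → y ≠ N ∧ y ≠ -N := by
    intro y hy
    have h2 := (mem_pmSet.mp hy).2
    rw [abs_le] at h2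
    constructor <;> omega
  have epm : ∀ y : ℤ, y ∈ pmSet n → extend' n v σ y = σ y := by
    intro y hy
    obtain ⟨h1, h2⟩ := hpm_ne y hy
    exact eOther y h1 h2
  refine ⟨?_, ?_, ?_⟩
  · intro x hx
    have hx1 : x ≠ N := by
      intro h; apply hx; rw [h, mem_pmSet_succ]; right; push_cast; omega
    have hx2 : x ≠ -N := by
      intro h; apply hx; rw [h, mem_pmSet_succ]; right; push_cast; rw [abs_neg]; omega
    have hx3 : x ∉ pmSet n := fun h => hx (mem_pmSet_succ.mpr (Or.inl h))
    rw [eOther x hx1 hx2]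
    exact hv.1 x hx3
  · intro x
    by_cases h1 : x = N
    · subst h1; rw [eN, eNeg]
    · by_cases h2 : x = -N
      · subst h2
        rw [neg_neg, eN, eNeg, neg_neg]
      · rw [eOther x h1 h2, eOther (-x) (by omega) (by omega), hv.2.1]
  · intro x hx
    rcases mem_pmSet_succ.mp hx with hxn | hxe
    · rw [epm x hxn]
      rcases hv.2.2 x hxn with h | h
      · left; exact h
      · right
        refine ⟨h.1, ?_⟩
        by_cases h0 : σ x = 0
        · rw [h0, abs_zero]
          have h0pm : (0:ℤ) ∉ pmSet n := by rw [mem_pmSet]; simp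
          rw [eOther 0 (by omega) (by omega), hv.1 0 h0pm]
        · have hm : |σ x| ∈ pmSet n := by
            rw [mem_pmSet]
            refine ⟨by simpa using h0, ?_⟩
            rw [abs_abs]
            exact h.1.trans (mem_pmSet.mp hxn).2
          rw [epm _ hm]; exact h.2
    · have hxN : x = N ∨ x = -N := by
        rcases abs_cases x with ⟨ha, _⟩ | ⟨ha, _⟩
        · left; omega
        · right; omega
      have key : ∀ w : ℤ, extend' n v σ x = w →
          (w = 0 ∨ (|w| ≤ |x| ∧ extend' n v σ |w| = |w|)) →
          (extend' n v σ x = 0 ∨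
            (|extend' n v σ x| ≤ |x| ∧ extend' n v σ |extend' n v σ x| = |extend' n v σ x|)) := by
        intro w hw hcase
        rw [hw]; exact hcase
      have hxabs : |x| = N := hxe
      rcases hxN with rfl | rfl
      · rw [eN]
        rcases hvv with h | h | h
        · right
          subst h
          exact ⟨le_refl _, by rw [hNabs, eN]⟩
        · left; exact h
        · right
          have hm : |v| ∈ pmSet n := by
            rw [mem_pmSet]
            exact ⟨by simpa using h.1, by rw [abs_abs]; exact h.2.1⟩
          refine ⟨by rw [hxabs]; omega, ?_⟩
          rw [epm _ hm, h.2.2]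
      · rw [eNeg]
        rcases hvv with h | h | h
        · right
          subst h
          have : |(-N)| = N := by rw [abs_neg, hNabs]
          refine ⟨le_refl _, ?_⟩
          rw [this, eN]
        · left; rw [h, neg_zero]
        · right
          have hm : |(-v)| ∈ pmSet n := by
            rw [mem_pmSet, abs_neg]
            exact ⟨by simpa using h.1, by rw [abs_abs]; exact h.2.1⟩
          refine ⟨by rw [abs_neg, hxabs]; omega, ?_⟩
          rw [epm _ hm, abs_neg, h.2.2]

lemma value_cases {n : ℕ} {σ : ℤ → ℤ} (hv : SValid (n+1) σ) :
    σ ((n:ℤ)+1) = (n:ℤ)+1 ∨ σ ((n:ℤ)+1) = 0 ∨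
      (σ ((n:ℤ)+1) ≠ 0 ∧ |σ ((n:ℤ)+1)| ≤ (n:ℤ) ∧ trunc n σ |σ ((n:ℤ)+1)| = |σ ((n:ℤ)+1)|) := by
  have hN : ((n:ℤ)+1) ∈ pmSet (n+1) := by
    rw [mem_pmSet]
    push_cast
    constructor
    · omega
    · rw [abs_of_nonneg (by positivity)]
  set v := σ ((n:ℤ)+1) with hvdef
  rcases hv.2.2 _ hN with h | h
  · right; left; exact h
  · by_cases h0 : v = 0
    · right; left; exact h0
    · have hNa : |((n:ℤ)+1)| = (n:ℤ)+1 := abs_of_nonneg (by positivity)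
      rw [hNa] at h
      by_cases hle : |v| ≤ (n:ℤ)
      · right; right
        refine ⟨h0, hle, ?_⟩
        rw [trunc]
        have : |(|v|)| ≠ (n:ℤ)+1 := by rw [abs_abs]; omega
        simp only [if_neg this]
        exact h.2
      · have h1b : |v| ≤ (n:ℤ)+1 := h.1
        have habs : |v| = (n:ℤ)+1 := by omega
        rcases abs_cases v with ⟨hc, _⟩ | ⟨hc, _⟩
        · left; omega
        · -- v = -(n+1), σ |v| = |v| gives σ (n+1) = n+1 = v, contradiction
          left
          have := h.2
          rw [habs] at this
          rw [← hvdef] at this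
          exact this

noncomputable def optionsF (n : ℕ) (σ : ℤ → ℤ) : Finset ℤ :=
  insert 0 (((Finset.Icc (1:ℤ) (n:ℤ)).filter (fun x => σ x = x)) ∪
    ((Finset.Icc (1:ℤ) (n:ℤ)).filter (fun x => σ x = x)).image (fun x => -x))

lemma mem_optionsF {n : ℕ} {σ : ℤ → ℤ} {v : ℤ} :
    v ∈ optionsF n σ ↔ v = 0 ∨ (v ≠ 0 ∧ |v| ≤ (n:ℤ) ∧ σ |v| = |v|) := by
  simp only [optionsF, Finset.mem_insert, Finset.mem_union, Finset.mem_image,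
    Finset.mem_filter, Finset.mem_Icc]
  constructor
  · rintro (h | ⟨⟨h1, h2⟩, h3⟩ | ⟨y, ⟨⟨h1, h2⟩, h3⟩, rfl⟩)
    · left; exact h
    · right
      have : |v| = v := abs_of_nonneg (by omega)
      exact ⟨by omega, by omega, by rw [this]; exact h3⟩
    · right
      have : |(-y)| = y := by rw [abs_neg, abs_of_nonneg (by omega)]
      exact ⟨by omega, by omega, by rw [this]; exact h3⟩
  · rintro (h | ⟨h1, h2, h3⟩)
    · left; exact h
    · right
      rcases abs_cases v with ⟨hc, _⟩ | ⟨hc, _⟩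
      · left
        rw [hc] at h3
        exact ⟨⟨by omega, by omega⟩, h3⟩
      · right
        refine ⟨-v, ⟨⟨by omega, by omega⟩, by rw [← hc]; exact h3⟩, by omega⟩

lemma options_ne {n : ℕ} {σ : ℤ → ℤ} {v : ℤ} (h : v ∈ optionsF n σ) : v ≠ (n:ℤ)+1 := by
  rcases mem_optionsF.mp h with h | h
  · omega
  · intro hc
    have := h.2.1
    rw [hc, abs_of_nonneg (by positivity)] at this
    omega

lemma card_optionsF {n : ℕ} (σ : ℤ → ℤ) : (optionsF n σ).card = 2 * sfix n σ + 1 := by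
  classical
  set F := (Finset.Icc (1:ℤ) (n:ℤ)).filter (fun x => σ x = x) with hF
  have h1 : ∀ x ∈ F, (1:ℤ) ≤ x := by
    intro x hx; exact ((Finset.mem_Icc.mp (Finset.mem_filter.mp hx).1)).1
  have hdisj : Disjoint F (F.image (fun x => -x)) := by
    rw [Finset.disjoint_left]
    intro x hx1 hx2
    obtain ⟨y, hy, rfl⟩ := Finset.mem_image.mp hx2
    have := h1 _ hx1
    have := h1 _ hy
    omega
  have h0 : (0:ℤ) ∉ F ∪ F.image (fun x => -x) := by
    rw [Finset.mem_union]
    rintro (h | h)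
    · have := h1 _ h; omega
    · obtain ⟨y, hy, hy2⟩ := Finset.mem_image.mp h
      have := h1 _ hy; omega
  rw [optionsF, ← hF, Finset.card_insert_of_notMem h0,
    Finset.card_union_of_disjoint hdisj, Finset.card_image_of_injective _ neg_injective]
  rw [sfix, ← hF]
  omega

def equivFix (n k : ℕ) :
    {σ : SVk (n+1) (k+1) // σ.1 ((n:ℤ)+1) = (n:ℤ)+1} ≃ SVk n k where
  toFun σ := ⟨trunc n σ.1.1, trunc_valid σ.1.2.1, by
    have hs := sfix_succ (n := n) (σ := σ.1.1)
    rw [σ.1.2.2, if_pos σ.2] at hs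
    omega⟩
  invFun τ := ⟨⟨extend' n ((n:ℤ)+1) τ.1, extend_valid τ.2.1 (Or.inl rfl), by
      have hs := sfix_succ (n := n) (σ := extend' n ((n:ℤ)+1) τ.1)
      rw [trunc_extend τ.2.1.1] at hs
      have he : extend' n ((n:ℤ)+1) τ.1 ((n:ℤ)+1) = (n:ℤ)+1 := by simp [extend']
      rw [he, if_pos rfl, τ.2.2] at hs
      omega⟩, by simp [extend']⟩
  left_inv σ := by
    apply Subtype.ext; apply Subtype.ext
    have h := extend_trunc σ.1.2.1
    rw [σ.2] at h
    exact h
  right_inv τ := Subtype.ext (trunc_extend τ.2.1.1)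

def equivNonfix (n k : ℕ) :
    {σ : SVk (n+1) k // σ.1 ((n:ℤ)+1) ≠ (n:ℤ)+1} ≃
      {p : SVk n k × ℤ // p.2 ∈ optionsF n p.1.1} where
  toFun σ := ⟨(⟨trunc n σ.1.1, trunc_valid σ.1.2.1, by
      have hs := sfix_succ (n := n) (σ := σ.1.1)
      rw [σ.1.2.2, if_neg σ.2] at hs
      omega⟩, σ.1.1 ((n:ℤ)+1)), by
    rw [mem_optionsF]
    rcases value_cases σ.1.2.1 with h | h | h
    · exact absurd h σ.2
    · left; exact h
    · right; exact h⟩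
  invFun t := ⟨⟨extend' n t.1.2 t.1.1.1, extend_valid t.1.1.2.1 (by
      rcases mem_optionsF.mp t.2 with h | h
      · right; left; exact h
      · right; right; exact h), by
      have hs := sfix_succ (n := n) (σ := extend' n t.1.2 t.1.1.1)
      rw [trunc_extend t.1.1.2.1.1] at hs
      have he : extend' n t.1.2 t.1.1.1 ((n:ℤ)+1) = t.1.2 := by simp [extend']
      rw [he, if_neg (options_ne t.2), t.1.1.2.2] at hs
      omega⟩, by
    show extend' n t.1.2 t.1.1.1 ((n:ℤ)+1) ≠ (n:ℤ)+1
    have he : extend' n t.1.2 t.1.1.1 ((n:ℤ)+1) = t.1.2 := by simp [extend']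
    rw [he]
    exact options_ne t.2⟩
  left_inv σ := by
    apply Subtype.ext; apply Subtype.ext
    exact extend_trunc σ.1.2.1
  right_inv t := by
    apply Subtype.ext
    apply Prod.ext
    · exact Subtype.ext (trunc_extend t.1.1.2.1.1)
    · simp [extend']

def prodEquivSigma {α : Type*} (f : α → Finset ℤ) :
    {p : α × ℤ // p.2 ∈ f p.1} ≃ Σ a : α, ↥(f a) where
  toFun p := ⟨p.1.1, ⟨p.1.2, p.2⟩⟩
  invFun s := ⟨(s.1, s.2.1), s.2.2⟩
  left_inv p := rfl
  right_inv s := rfl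

lemma card_prod_subtype (n k : ℕ) :
    Nat.card {p : SVk n k × ℤ // p.2 ∈ optionsF n p.1.1} =
      (2 * k + 1) * Nat.card (SVk n k) := by
  classical
  rw [Nat.card_congr (prodEquivSigma (fun a : SVk n k => optionsF n a.1))]
  letI := Fintype.ofFinite (SVk n k)
  rw [Nat.card_eq_fintype_card, Fintype.card_sigma]
  have : ∀ a : SVk n k, Fintype.card ↥(optionsF n a.1) = 2 * k + 1 := by
    intro a
    rw [Fintype.card_coe, card_optionsF, a.2.2]
  rw [Finset.sum_congr rfl (fun a _ => this a), Finset.sum_const, smul_eq_mul,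
    Nat.card_eq_fintype_card, mul_comm]
  rfl

lemma card_split (n k : ℕ) :
    Nat.card (SVk (n+1) k) =
      Nat.card {σ : SVk (n+1) k // σ.1 ((n:ℤ)+1) = (n:ℤ)+1} +
      Nat.card {σ : SVk (n+1) k // σ.1 ((n:ℤ)+1) ≠ (n:ℤ)+1} := by
  classical
  rw [← Nat.card_sum]
  exact Nat.card_congr (Equiv.sumCompl _).symm

lemma card_SVk_succ (n k : ℕ) :
    Nat.card (SVk (n+1) (k+1)) =
      Nat.card (SVk n k) + (2*(k+1)+1) * Nat.card (SVk n (k+1)) := by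
  rw [card_split, Nat.card_congr (equivFix n k), Nat.card_congr (equivNonfix n (k+1)),
    card_prod_subtype]

lemma card_SVk_succ_zero (n : ℕ) :
    Nat.card (SVk (n+1) 0) = Nat.card (SVk n 0) := by
  have hempty : IsEmpty {σ : SVk (n+1) 0 // σ.1 ((n:ℤ)+1) = (n:ℤ)+1} := by
    constructor
    rintro ⟨⟨σf, hval, hsf⟩, hσ⟩
    have hs := sfix_succ (n := n) (σ := σf)
    rw [hsf, if_pos hσ] at hs
    omega
  rw [card_split, Nat.card_of_isEmpty, Nat.card_congr (equivNonfix n 0),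
    card_prod_subtype]
  omega

lemma pmSet_zero : pmSet 0 = ∅ := by
  ext x
  rw [mem_pmSet]
  push_cast
  simp only [Finset.notMem_empty, iff_false]
  intro ⟨h1, h2⟩
  have h3 : |x| = 0 := le_antisymm h2 (abs_nonneg x)
  rw [abs_eq_zero] at h3
  exact h1 h3

lemma sfix_zero (σ : ℤ → ℤ) : sfix 0 σ = 0 := by
  rw [sfix]
  have : Finset.Icc (1:ℤ) ((0:ℕ):ℤ) = ∅ := by
    apply Finset.Icc_eq_empty
    norm_num
  rw [this, Finset.filter_empty, Finset.card_empty]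

lemma card_SVk_zero_zero : Nat.card (SVk 0 0) = 1 := by
  have : Unique (SVk 0 0) := {
    default := ⟨fun _ => 0, ⟨fun _ _ => rfl, fun _ => (neg_zero).symm,
      fun x hx => absurd hx (by rw [pmSet_zero]; exact Finset.notMem_empty x)⟩,
      sfix_zero _⟩
    uniq := by
      rintro ⟨σ, hσ, _⟩
      apply Subtype.ext
      funext x
      exact hσ.1 x (by rw [pmSet_zero]; exact Finset.notMem_empty x) }
  exact Nat.card_unique

lemma card_SVk_zero_succ (k : ℕ) : Nat.card (SVk 0 (k+1)) = 0 := by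
  have : IsEmpty (SVk 0 (k+1)) := by
    constructor
    rintro ⟨σ, _, hs⟩
    rw [sfix_zero] at hs
    exact Nat.succ_ne_zero k hs.symm
  exact Nat.card_of_isEmpty

lemma card_SVk_gt {n k : ℕ} (h : n < k) : Nat.card (SVk n k) = 0 := by
  have : IsEmpty (SVk n k) := by
    constructor
    rintro ⟨σ, _, hs⟩
    have hle : sfix n σ ≤ (Finset.Icc (1:ℤ) (n:ℤ)).card :=
      Finset.card_filter_le _ _
    rw [Int.card_Icc] at hle
    rw [sfix] at hs
    rw [sfix] at hle
    omega
  exact Nat.card_of_isEmpty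

noncomputable def spEquiv (n k : ℕ) :
    {P : Finpartition (pmSet n) // IsSignedPartition n P ∧
      (P.parts.filter (fun C => negSet C ≠ C)).card = 2 * k} ≃ SVk n k where
  toFun P := ⟨sigmaOf n P.1, sigmaOf_valid P.2.1, by
    have h := parts_card_eq P.2.1
    rw [P.2.2] at h
    omega⟩
  invFun σ := ⟨partOf n σ.1, partOf_signed σ.2.1, by
    have h := parts_card_eq (partOf_signed σ.2.1)
    rw [sigmaOf_partOf σ.2.1, σ.2.2] at h
    exact h⟩
  left_inv P := Subtype.ext (partOf_sigmaOf P.2.1)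
  right_inv σ := Subtype.ext (sigmaOf_partOf σ.2.1)

lemma poly_main (n : ℕ) (x : ℝ) :
    x ^ n = ∑ k ∈ Finset.range (n + 1),
      (Nat.card (SVk n k) : ℝ) * ∏ j ∈ Finset.range k, (x - (2 * j + 1)) := by
  induction n with
  | zero => simp [card_SVk_zero_zero]
  | succ n ih =>
    have hrec : ∀ k : ℕ, (Nat.card (SVk (n+1) (k+1)) : ℝ) =
        (Nat.card (SVk n k) : ℝ) + (2*(k:ℝ)+3) * (Nat.card (SVk n (k+1)) : ℝ) := by
      intro k; rw [card_SVk_succ]; push_cast; ring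
    have h0 : (Nat.card (SVk (n+1) 0) : ℝ) = (Nat.card (SVk n 0) : ℝ) := by
      rw [card_SVk_succ_zero]
    have hvan : (Nat.card (SVk n (n+1)) : ℝ) = 0 := by
      rw [card_SVk_gt (Nat.lt_succ_self n)]; norm_num
    have hstep : x ^ (n+1) =
        (∑ k ∈ Finset.range (n+1), (Nat.card (SVk n k) : ℝ) *
          ∏ j ∈ Finset.range (k+1), (x - (2 * j + 1)))
        + ∑ k ∈ Finset.range (n+1), (2*(k:ℝ)+1) * (Nat.card (SVk n k) : ℝ) *
          ∏ j ∈ Finset.range k, (x - (2 * j + 1)) := by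
      rw [← Finset.sum_add_distrib]
      have : x ^ (n+1) = x * x ^ n := by ring
      rw [this, ih, Finset.mul_sum]
      apply Finset.sum_congr rfl
      intro k _
      rw [Finset.prod_range_succ]
      ring
    rw [hstep]
    rw [Finset.sum_range_succ' (fun k => (Nat.card (SVk (n+1) k) : ℝ) *
      ∏ j ∈ Finset.range k, (x - (2 * j + 1))) (n+1)]
    have hsnd : ∑ k ∈ Finset.range (n+1), (2*(k:ℝ)+1) * (Nat.card (SVk n k) : ℝ) *
          ∏ j ∈ Finset.range k, (x - (2 * j + 1))
        = (∑ k ∈ Finset.range (n+1), (2*(k:ℝ)+3) * (Nat.card (SVk n (k+1)) : ℝ) *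
          ∏ j ∈ Finset.range (k+1), (x - (2 * j + 1)))
          + (Nat.card (SVk n 0) : ℝ) * ∏ j ∈ Finset.range 0, (x - (2 * j + 1)) := by
      have hfull := Finset.sum_range_succ' (fun k => (2*(k:ℝ)+1) * (Nat.card (SVk n k) : ℝ) *
          ∏ j ∈ Finset.range k, (x - (2 * j + 1))) (n+1)
      have hlast := Finset.sum_range_succ (fun k => (2*(k:ℝ)+1) * (Nat.card (SVk n k) : ℝ) *
          ∏ j ∈ Finset.range k, (x - (2 * j + 1))) (n+1)
      rw [hvan] at hlast
      have : ∑ k ∈ Finset.range (n+2), (2*(k:ℝ)+1) * (Nat.card (SVk n k) : ℝ) *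
          ∏ j ∈ Finset.range k, (x - (2 * j + 1))
          = ∑ k ∈ Finset.range (n+1), (2*(k:ℝ)+1) * (Nat.card (SVk n k) : ℝ) *
          ∏ j ∈ Finset.range k, (x - (2 * j + 1)) := by
        rw [hlast]; ring
      rw [← this, hfull]
      apply congrArg₂
      · apply Finset.sum_congr rfl
        intro k _
        push_cast
        ring
      · push_cast
        ring
    rw [hsnd]
    simp only [hrec, h0]
    rw [show ∑ k ∈ Finset.range (n+1),
        ((Nat.card (SVk n k) : ℝ) + (2*(k:ℝ)+3) * (Nat.card (SVk n (k+1)) : ℝ)) *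
          ∏ j ∈ Finset.range (k+1), (x - (2 * j + 1))
      = (∑ k ∈ Finset.range (n+1), (Nat.card (SVk n k) : ℝ) *
          ∏ j ∈ Finset.range (k+1), (x - (2 * j + 1)))
        + ∑ k ∈ Finset.range (n+1), (2*(k:ℝ)+3) * (Nat.card (SVk n (k+1)) : ℝ) *
          ∏ j ∈ Finset.range (k+1), (x - (2 * j + 1)) from by
        rw [← Finset.sum_add_distrib]
        apply Finset.sum_congr rfl
        intro k _
        ring]
    ring

/-- For every natural `n` and real `x`:
`x^n = Σ_{k=0}^{n} S_B(n,k) · [x]^B_k` where `[x]^B_k = (x-1)(x-3)⋯(x-2k+1)`. -/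
theorem typeB_stirling_falling_factorial (n : ℕ) (x : ℝ) :
    x ^ n = ∑ k ∈ Finset.range (n + 1),
      (SB n k : ℝ) * ∏ j ∈ Finset.range k, (x - (2 * j + 1)) := by
  rw [poly_main n x]
  apply Finset.sum_congr rfl
  intro k _
  rw [show SB n k = Nat.card (SVk n k) from Nat.card_congr (spEquiv n k)]
end

section
/- For every natural number n and every odd natural number m, m^n = Σ_{k=0}^{n} S_B(n,k) · (m-1)(m-3)⋯(m-2k+1), where the empty product (k=0) equals 1. -/
open Finset

namespace SignedAux

noncomputable instance (n : ℕ) : DecidableEq (Finpartition (pmSet n)) := Classical.decEq _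

variable {n : ℕ}

lemma mem_pmSet {x : ℤ} : x ∈ pmSet n ↔ x ≠ 0 ∧ -(n:ℤ) ≤ x ∧ x ≤ n := by
  simp [pmSet, mem_erase, mem_Icc, and_assoc]

lemma neg_mem_pmSet {x : ℤ} (h : x ∈ pmSet n) : -x ∈ pmSet n := by
  rw [mem_pmSet] at h ⊢; omega

lemma mem_negSet {C : Finset ℤ} {x : ℤ} : x ∈ negSet C ↔ -x ∈ C := by
  constructor
  · rintro h
    rcases Finset.mem_image.1 h with ⟨a, ha, rfl⟩
    simpa using ha
  · intro h; exact Finset.mem_image.2 ⟨-x, h, by ring⟩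

lemma negSet_negSet (C : Finset ℤ) : negSet (negSet C) = C := by
  ext x; simp [mem_negSet]

lemma negSet_card (C : Finset ℤ) : (negSet C).card = C.card :=
  Finset.card_image_of_injective _ neg_injective

/-- The odd extension of `f` to `ℤ`. -/
def ev (n : ℕ) (f : Fin n → ℤ) (x : ℤ) : ℤ :=
  if h : x.natAbs - 1 < n then x.sign * f ⟨x.natAbs - 1, h⟩ else 0

lemma ev_neg (f : Fin n → ℤ) (x : ℤ) : ev n f (-x) = - ev n f x := by
  unfold ev
  rw [Int.natAbs_neg, Int.sign_neg]
  split
  · push_cast; ring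
  · ring

lemma ev_pos (f : Fin n → ℤ) (i : Fin n) : ev n f ((i : ℤ) + 1) = f i := by
  have h1 : ((i : ℤ) + 1).natAbs = (i : ℕ) + 1 := by
    have : ((i : ℤ) + 1) = (((i : ℕ) + 1 : ℕ) : ℤ) := by push_cast; ring
    rw [this, Int.natAbs_natCast]
  have h2 : ((i : ℤ) + 1).sign = 1 := Int.sign_eq_one_of_pos (by positivity)
  unfold ev
  simp only [h1, h2, Nat.add_sub_cancel, one_mul]
  rw [dif_pos i.isLt]

lemma pt_mem (i : Fin n) : ((i : ℤ) + 1) ∈ pmSet n := by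
  have h := i.isLt
  rw [mem_pmSet]
  refine ⟨by positivity, by omega, by omega⟩

lemma pmSet_cases {y : ℤ} (hy : y ∈ pmSet n) :
    ∃ i : Fin n, y = (i : ℤ) + 1 ∨ y = -((i : ℤ) + 1) := by
  rw [mem_pmSet] at hy
  rcases lt_or_gt_of_ne hy.1 with h | h
  · refine ⟨⟨(-y).toNat - 1, by omega⟩, Or.inr ?_⟩
    have : (((-y).toNat - 1 : ℕ) : ℤ) = -y - 1 := by omega
    rw [this]; ring
  · refine ⟨⟨y.toNat - 1, by omega⟩, Or.inl ?_⟩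
    have : ((y.toNat - 1 : ℕ) : ℤ) = y - 1 := by omega
    rw [this]; ring

/-- The fiber of value `v` under `ev n f`, inside `pmSet n`. -/
noncomputable def fib (n : ℕ) (f : Fin n → ℤ) (v : ℤ) : Finset ℤ := (pmSet n).filter (fun y => ev n f y = v)

lemma mem_fib {f : Fin n → ℤ} {v y : ℤ} : y ∈ fib n f v ↔ y ∈ pmSet n ∧ ev n f y = v := by
  simp [fib]

lemma negSet_fib (f : Fin n → ℤ) (v : ℤ) : negSet (fib n f v) = fib n f (-v) := by
  ext y
  rw [mem_negSet, mem_fib, mem_fib]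
  constructor
  · rintro ⟨h1, h2⟩
    refine ⟨by simpa using neg_mem_pmSet h1, ?_⟩
    have := ev_neg f (-y)
    simp at this
    omega
  · rintro ⟨h1, h2⟩
    refine ⟨neg_mem_pmSet h1, ?_⟩
    rw [ev_neg]; omega

/-- The partition of `pmSet n` into fibers of `ev n f`. -/
noncomputable def fibers (n : ℕ) (f : Fin n → ℤ) : Finpartition (pmSet n) where
  parts := (pmSet n).image (fun x => fib n f (ev n f x))
  supIndep := by
    rw [Finset.supIndep_iff_pairwiseDisjoint]
    intro C hC D hD hne
    simp only [coe_image, Set.mem_image, mem_coe] at hC hD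
    obtain ⟨x, hx, rfl⟩ := hC
    obtain ⟨y, hy, rfl⟩ := hD
    simp only [Function.onFun, id_eq]
    rw [Finset.disjoint_left]
    intro a haC haD
    rw [mem_fib] at haC haD
    exact hne (by rw [← haC.2, haD.2])
  sup_parts := by
    apply le_antisymm
    · rw [Finset.sup_le_iff]
      intro C hC
      rcases Finset.mem_image.1 hC with ⟨x, hx, rfl⟩
      exact Finset.filter_subset _ _
    · intro a ha
      rw [Finset.mem_sup]
      exact ⟨fib n f (ev n f a), Finset.mem_image_of_mem _ ha, mem_fib.2 ⟨ha, rfl⟩⟩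
  bot_notMem := by
    intro h
    rcases Finset.mem_image.1 h with ⟨x, hx, heq⟩
    have : x ∈ fib n f (ev n f x) := mem_fib.2 ⟨hx, rfl⟩
    rw [heq] at this
    simp at this

lemma mem_fibers_parts {f : Fin n → ℤ} {C : Finset ℤ} :
    C ∈ (fibers n f).parts ↔ ∃ x ∈ pmSet n, fib n f (ev n f x) = C := by
  simp [fibers, Finset.mem_image]

lemma fib_inj {f : Fin n → ℤ} {v w : ℤ} (hv : (fib n f v).Nonempty)
    (h : fib n f v = fib n f w) : v = w := by
  obtain ⟨y, hy⟩ := hv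
  have hy' := hy
  rw [h, mem_fib] at hy'
  rw [mem_fib] at hy
  omega

/-- The value of a block (the common value of `ev n f` on it). -/
def bval (n : ℕ) (f : Fin n → ℤ) (C : Finset ℤ) : ℤ :=
  if h : C.Nonempty then ev n f (C.min' h) else 0

lemma bval_fib {f : Fin n → ℤ} {v : ℤ} (h : (fib n f v).Nonempty) :
    bval n f (fib n f v) = v := by
  rw [bval, dif_pos h]
  exact (mem_fib.1 (Finset.min'_mem _ h)).2

lemma ev_eq_bval {f : Fin n → ℤ} {C : Finset ℤ} (hC : C ∈ (fibers n f).parts)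
    {y : ℤ} (hy : y ∈ C) : ev n f y = bval n f C := by
  rcases mem_fibers_parts.1 hC with ⟨x, hx, rfl⟩
  rw [bval_fib ⟨y, hy⟩]
  exact (mem_fib.1 hy).2

lemma fibers_part_eq {f : Fin n → ℤ} {x : ℤ} (hx : x ∈ pmSet n) :
    (fibers n f).part x = fib n f (ev n f x) := by
  exact Finpartition.part_eq_of_mem _ (mem_fibers_parts.2 ⟨x, hx, rfl⟩) (mem_fib.2 ⟨hx, rfl⟩)

lemma fibers_signed (f : Fin n → ℤ) : IsSignedPartition n (fibers n f) := by
  constructor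
  · intro C hC
    rcases mem_fibers_parts.1 hC with ⟨x, hx, rfl⟩
    rw [negSet_fib, ← ev_neg]
    exact mem_fibers_parts.2 ⟨-x, neg_mem_pmSet hx, rfl⟩
  · rw [Finset.card_le_one]
    intro C hC D hD
    rw [Finset.mem_filter] at hC hD
    rcases mem_fibers_parts.1 hC.1 with ⟨x, hx, rfl⟩
    rcases mem_fibers_parts.1 hD.1 with ⟨y, hy, rfl⟩
    have key : ∀ z ∈ pmSet n, negSet (fib n f (ev n f z)) = fib n f (ev n f z) →
        ev n f z = 0 := by
      intro z hz hself
      rw [negSet_fib] at hself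
      have hne : (fib n f (-(ev n f z))).Nonempty := by
        rw [hself]; exact ⟨z, mem_fib.2 ⟨hz, rfl⟩⟩
      have := fib_inj hne hself
      omega
    have hx0 : ev n f x = 0 := key x hx hC.2
    have hy0 : ev n f y = 0 := key y hy hD.2
    rw [hx0, hy0]


section Involution

lemma card_eq_two_mul_filter {α : Type*} [DecidableEq α] (S : Finset α) (σ : α → α)
    (p : α → Prop) [DecidablePred p] (hmem : ∀ x ∈ S, σ x ∈ S)
    (hinv : ∀ x ∈ S, σ (σ x) = x) (hp : ∀ x ∈ S, (p x ↔ ¬ p (σ x))) :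
    S.card = 2 * (S.filter p).card := by
  have h2 : (S.filter fun x => ¬ p x).card = (S.filter p).card := by
    apply Finset.card_nbij' (i := σ) (j := σ)
    · intro a ha
      rw [Finset.mem_coe, Finset.mem_filter] at ha ⊢
      refine ⟨hmem a ha.1, (hp _ (hmem a ha.1)).2 ?_⟩
      rw [hinv a ha.1]
      exact ha.2
    · intro a ha
      rw [Finset.mem_coe, Finset.mem_filter] at ha ⊢
      exact ⟨hmem a ha.1, (hp a ha.1).1 ha.2⟩
    · intro a ha
      exact hinv a (Finset.mem_filter.1 ha).1
    · intro a ha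
      exact hinv a (Finset.mem_filter.1 ha).1
  have h3 := Finset.card_filter_add_card_filter_not (s := S) (p := p)
  omega

end Involution

section PosB

/-- A canonical choice of one block out of each pair `{C, -C}` with `C ≠ -C`. -/
def posB (C : Finset ℤ) : Prop := (C \ negSet C).min ≤ (negSet C \ C).min

noncomputable instance : DecidablePred posB := fun C => by unfold posB; infer_instance

lemma posB_iff {C : Finset ℤ} (h : negSet C ≠ C) : posB C ↔ ¬ posB (negSet C) := by
  have hA : (C \ negSet C).Nonempty := by
    rw [Finset.sdiff_nonempty]
    intro hsub
    exact h (Finset.eq_of_subset_of_card_le hsub (le_of_eq (negSet_card C))).symm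
  have hB : (negSet C \ C).Nonempty := by
    rw [Finset.sdiff_nonempty]
    intro hsub
    exact h (Finset.eq_of_subset_of_card_le hsub (le_of_eq (negSet_card C).symm))
  have hne : (C \ negSet C).min ≠ (negSet C \ C).min := by
    intro heq
    have h1 : ↑((C \ negSet C).min' hA) = (C \ negSet C).min := Finset.coe_min' hA
    have h2 : ↑((negSet C \ C).min' hB) = (negSet C \ C).min := Finset.coe_min' hB
    have h3 : (C \ negSet C).min' hA = (negSet C \ C).min' hB := by
      have := h1.trans (heq.trans h2.symm)
      exact_mod_cast this
    have h4 := Finset.min'_mem _ hA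
    have h5 := Finset.min'_mem _ hB
    rw [h3] at h4
    rw [Finset.mem_sdiff] at h4 h5
    exact h5.2 h4.1
  unfold posB
  rw [negSet_negSet, not_le]
  exact ⟨fun h' => lt_of_le_of_ne h' hne, le_of_lt⟩

end PosB


section Counting

variable {n : ℕ}

/-- The nonzero blocks of a partition. -/
def NZ (Q : Finpartition (pmSet n)) : Finset (Finset ℤ) :=
  Q.parts.filter (fun C => negSet C ≠ C)

/-- The "positive" nonzero blocks: one from each pair. -/
noncomputable def PB (Q : Finpartition (pmSet n)) : Finset (Finset ℤ) := (NZ Q).filter posB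

lemma negSet_mem_NZ {Q : Finpartition (pmSet n)} (hQ : IsSignedPartition n Q)
    {C : Finset ℤ} (hC : C ∈ NZ Q) : negSet C ∈ NZ Q := by
  rw [NZ, Finset.mem_filter] at hC ⊢
  refine ⟨hQ.1 C hC.1, ?_⟩
  rw [negSet_negSet]
  exact fun hh => hC.2 hh.symm

lemma NZ_card_eq {Q : Finpartition (pmSet n)} (hQ : IsSignedPartition n Q) :
    (NZ Q).card = 2 * (PB Q).card := by
  apply card_eq_two_mul_filter _ negSet
  · exact fun C hC => negSet_mem_NZ hQ hC
  · exact fun C _ => negSet_negSet C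
  · exact fun C hC => posB_iff (Finset.mem_filter.1 hC).2

lemma PB_cases {Q : Finpartition (pmSet n)} (hQ : IsSignedPartition n Q)
    {C : Finset ℤ} (hC : C ∈ NZ Q) : C ∈ PB Q ∨ negSet C ∈ PB Q := by
  by_cases h : posB C
  · exact Or.inl (Finset.mem_filter.2 ⟨hC, h⟩)
  · refine Or.inr (Finset.mem_filter.2 ⟨negSet_mem_NZ hQ hC, ?_⟩)
    have := posB_iff (Finset.mem_filter.1 hC).2
    by_contra hp
    exact h (this.2 hp)

lemma not_negSet_mem_PB {Q : Finpartition (pmSet n)}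
    {C : Finset ℤ} (hC : C ∈ PB Q) : negSet C ∉ PB Q := by
  rw [PB, Finset.mem_filter] at hC
  intro hD
  rw [PB, Finset.mem_filter] at hD
  exact ((posB_iff (Finset.mem_filter.1 hC.1).2).1 hC.2) hD.2

/-- The set of nonzero values attained by `ev n f`. -/
noncomputable def Vset (n : ℕ) (f : Fin n → ℤ) : Finset ℤ := ((pmSet n).image (ev n f)).erase 0

lemma mem_Vset {f : Fin n → ℤ} {v : ℤ} :
    v ∈ Vset n f ↔ v ≠ 0 ∧ ∃ y ∈ pmSet n, ev n f y = v := by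
  simp [Vset, Finset.mem_erase, Finset.mem_image]

lemma NZ_fibers_card (f : Fin n → ℤ) : (NZ (fibers n f)).card = (Vset n f).card := by
  symm
  apply Finset.card_nbij (i := fib n f)
  · intro v hv
    rw [Finset.mem_coe, mem_Vset] at hv
    obtain ⟨hv0, y, hy, hyv⟩ := hv
    rw [Finset.mem_coe, NZ, Finset.mem_filter]
    have hmem : fib n f v ∈ (fibers n f).parts := by
      rw [mem_fibers_parts]
      exact ⟨y, hy, by rw [hyv]⟩
    refine ⟨hmem, ?_⟩
    rw [negSet_fib]
    intro heq
    have := fib_inj (v := -v) (w := v) (by rw [heq]; exact ⟨y, mem_fib.2 ⟨hy, hyv⟩⟩) heq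
    omega
  · intro v hv w hw heq
    rw [Finset.mem_coe, mem_Vset] at hv
    obtain ⟨hv0, y, hy, hyv⟩ := hv
    exact fib_inj ⟨y, mem_fib.2 ⟨hy, hyv⟩⟩ heq
  · intro C hC
    rw [Finset.mem_coe, NZ, Finset.mem_filter] at hC
    obtain ⟨hC1, hC2⟩ := hC
    rcases mem_fibers_parts.1 hC1 with ⟨x, hx, rfl⟩
    refine ⟨ev n f x, ?_, rfl⟩
    rw [Finset.mem_coe, mem_Vset]
    refine ⟨?_, x, hx, rfl⟩
    intro h0
    apply hC2
    rw [negSet_fib, h0, neg_zero]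

lemma Vset_card_eq (f : Fin n → ℤ) :
    (Vset n f).card = 2 * ((Vset n f).filter (fun v => 0 < v)).card := by
  apply card_eq_two_mul_filter _ (fun v => -v)
  · intro v hv
    rw [mem_Vset] at hv ⊢
    obtain ⟨hv0, y, hy, hyv⟩ := hv
    exact ⟨by omega, -y, neg_mem_pmSet hy, by rw [ev_neg, hyv]⟩
  · intro v _; ring
  · intro v hv
    rw [mem_Vset] at hv
    have := hv.1
    omega

/-- The positive values attained, as absolute values of `f`. -/
lemma Vset_pos_eq (f : Fin n → ℤ) :
    (Vset n f).filter (fun v => 0 < v) = (Finset.univ.image (fun i => |f i|)).erase 0 := by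
  ext v
  rw [Finset.mem_filter, mem_Vset, Finset.mem_erase]
  simp only [Finset.mem_image, Finset.mem_univ, true_and]
  constructor
  · rintro ⟨⟨hv0, y, hy, hyv⟩, hvpos⟩
    rcases pmSet_cases hy with ⟨i, rfl | rfl⟩
    · rw [ev_pos] at hyv
      exact ⟨hv0, i, by rw [hyv]; exact abs_of_pos hvpos⟩
    · rw [ev_neg, ev_pos] at hyv
      exact ⟨hv0, i, by rw [show f i = -v by omega]; simp [abs_of_pos hvpos]⟩
  · rintro ⟨hv0, i, rfl⟩
    have habs : 0 < |f i| := by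
      rcases abs_nonneg (f i) |>.lt_or_eq with h | h
      · exact h
      · exact absurd h.symm hv0
    refine ⟨⟨hv0, ?_⟩, habs⟩
    rcases le_or_gt (f i) 0 with h | h
    · refine ⟨-((i : ℤ) + 1), neg_mem_pmSet (pt_mem i), ?_⟩
      rw [ev_neg, ev_pos]
      rw [abs_of_nonpos h]
    · exact ⟨(i : ℤ) + 1, pt_mem i, by rw [ev_pos, abs_of_pos h]⟩

end Counting


section Lab

variable {n t : ℕ}

/-- The finset of functions `Fin n → [-t, t]`. -/
noncomputable def Oset (n t : ℕ) : Finset (Fin n → ℤ) :=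
  Fintype.piFinset (fun _ => Finset.Icc (-(t:ℤ)) (t:ℤ))

lemma mem_Oset {f : Fin n → ℤ} : f ∈ Oset n t ↔ ∀ i, |f i| ≤ (t : ℤ) := by
  simp only [Oset, Fintype.mem_piFinset, Finset.mem_Icc]
  constructor
  · intro h i
    rw [abs_le]; exact h i
  · intro h i
    rw [← abs_le]; exact h i

lemma Oset_card : (Oset n t).card = (2 * t + 1) ^ n := by
  rw [Oset, Fintype.card_piFinset]
  have : (Finset.Icc (-(t:ℤ)) (t:ℤ)).card = 2 * t + 1 := by
    rw [Int.card_Icc]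
    omega
  simp [this]

lemma abs_sign_le (x : ℤ) : |x.sign| ≤ 1 := by
  rcases lt_trichotomy x 0 with h | h | h
  · rw [Int.sign_eq_neg_one_of_neg h]; norm_num
  · rw [h, Int.sign_zero]; norm_num
  · rw [Int.sign_eq_one_of_pos h]; norm_num

lemma ev_abs_le {f : Fin n → ℤ} (hf : ∀ i, |f i| ≤ (t : ℤ)) (x : ℤ) :
    |ev n f x| ≤ (t : ℤ) := by
  unfold ev
  split
  · calc |x.sign * f _| = |x.sign| * |f _| := abs_mul _ _
      _ ≤ 1 * |f _| := mul_le_mul_of_nonneg_right (abs_sign_le x) (abs_nonneg _)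
      _ = |f _| := one_mul _
      _ ≤ (t : ℤ) := hf _
  · simp

lemma bval_abs_le {f : Fin n → ℤ} (hf : ∀ i, |f i| ≤ (t : ℤ)) (C : Finset ℤ) :
    |bval n f C| ≤ (t : ℤ) := by
  unfold bval
  split
  · exact ev_abs_le hf _
  · simp

/-- The value function on blocks determined by the labeling `(e, s)` of the
positive blocks. -/
noncomputable def sval (Q : Finpartition (pmSet n)) (e : {C // C ∈ PB Q} → ℤ)
    (s : {C // C ∈ PB Q} → Bool) (C : Finset ℤ) : ℤ :=
  if h : C ∈ PB Q then (if s ⟨C, h⟩ then e ⟨C, h⟩ else -e ⟨C, h⟩)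
  else if h : negSet C ∈ PB Q then
    -(if s ⟨negSet C, h⟩ then e ⟨negSet C, h⟩ else -e ⟨negSet C, h⟩)
  else 0

variable {Q : Finpartition (pmSet n)} {e : {C // C ∈ PB Q} → ℤ} {s : {C // C ∈ PB Q} → Bool}

lemma sval_negSet (C : Finset ℤ) : sval Q e s (negSet C) = - sval Q e s C := by
  unfold sval
  by_cases h1 : C ∈ PB Q
  · have h2 : negSet C ∉ PB Q := not_negSet_mem_PB h1
    rw [dif_neg h2, dif_pos h1]
    simp only [negSet_negSet]
    rw [dif_pos h1]
  · rw [dif_neg h1]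
    by_cases h2 : negSet C ∈ PB Q
    · rw [dif_pos h2, dif_pos h2]
      ring
    · rw [dif_neg h2, dif_neg h2]
      simp only [negSet_negSet]
      rw [dif_neg h1, neg_zero]

lemma sval_abs_le (he : ∀ C, |e C| ≤ (t : ℤ)) (C : Finset ℤ) :
    |sval Q e s C| ≤ (t : ℤ) := by
  unfold sval
  split
  · split
    · exact he _
    · rw [abs_neg]; exact he _
  · split
    · rw [abs_neg]
      split
      · exact he _
      · rw [abs_neg]; exact he _
    · simp

lemma sval_of_mem_PB {C : Finset ℤ} (h : C ∈ PB Q) :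
    sval Q e s C = if s ⟨C, h⟩ then e ⟨C, h⟩ else -e ⟨C, h⟩ := dif_pos h

lemma sval_of_not_mem {C : Finset ℤ} (h1 : C ∉ PB Q) (h2 : negSet C ∉ PB Q) :
    sval Q e s C = 0 := by
  unfold sval
  rw [dif_neg h1, dif_neg h2]

lemma abs_sval_of_mem_PB (he1 : ∀ C, 1 ≤ e C) {C : Finset ℤ} (h : C ∈ PB Q) :
    |sval Q e s C| = e ⟨C, h⟩ := by
  rw [sval_of_mem_PB h]
  split
  · exact abs_of_pos (by linarith [he1 ⟨C, h⟩])
  · rw [abs_neg]; exact abs_of_pos (by linarith [he1 ⟨C, h⟩])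

end Lab


section Main

variable {n t : ℕ} {Q : Finpartition (pmSet n)}

lemma PB_subset_parts : PB Q ⊆ Q.parts := by
  intro C hC
  exact (Finset.mem_filter.1 (Finset.mem_filter.1 hC).1).1

lemma part_neg (hQ : IsSignedPartition n Q) {y : ℤ} (hy : y ∈ pmSet n) :
    Q.part (-y) = negSet (Q.part y) := by
  have h1 : Q.part y ∈ Q.parts := Q.part_mem.2 hy
  have h2 : negSet (Q.part y) ∈ Q.parts := hQ.1 _ h1
  exact Q.part_eq_of_mem h2 (mem_negSet.2 (by simpa using Q.mem_part hy))

lemma not_mem_NZ {C : Finset ℤ} (hQ : IsSignedPartition n Q) (hC : C ∈ Q.parts)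
    (h1 : C ∉ PB Q) (h2 : negSet C ∉ PB Q) : negSet C = C := by
  by_contra h
  have hNZ : C ∈ NZ Q := Finset.mem_filter.2 ⟨hC, h⟩
  rcases PB_cases hQ hNZ with h' | h'
  · exact h1 h'
  · exact h2 h'

variable {e : {C // C ∈ PB Q} → ℤ} {s : {C // C ∈ PB Q} → Bool}

lemma ev_sval (hQ : IsSignedPartition n Q) {y : ℤ} (hy : y ∈ pmSet n) :
    ev n (fun i => sval Q e s (Q.part ((i:ℤ)+1))) y = sval Q e s (Q.part y) := by
  rcases pmSet_cases hy with ⟨i, rfl | rfl⟩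
  · rw [ev_pos]
  · rw [ev_neg, ev_pos, part_neg hQ (pt_mem i), sval_negSet]

lemma sval_inj (hQ : IsSignedPartition n Q) (he1 : ∀ C, 1 ≤ e C)
    (einj : Function.Injective e) {C D : Finset ℤ} (hC : C ∈ Q.parts) (hD : D ∈ Q.parts)
    (h : sval Q e s C = sval Q e s D) : C = D := by
  -- reduce to a "representative" in `PB Q` or a self-negative block
  have key : ∀ E ∈ Q.parts, (∃ hE : E ∈ PB Q,
        (sval Q e s E = e ⟨E, hE⟩ ∨ sval Q e s E = -e ⟨E, hE⟩)) ∨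
      (∃ hE : negSet E ∈ PB Q,
        (sval Q e s E = e ⟨negSet E, hE⟩ ∨ sval Q e s E = -e ⟨negSet E, hE⟩)) ∨
      (sval Q e s E = 0 ∧ negSet E = E) := by
    intro E hE
    by_cases h1 : E ∈ PB Q
    · refine Or.inl ⟨h1, ?_⟩
      rw [sval_of_mem_PB h1]
      split
      · exact Or.inl rfl
      · exact Or.inr rfl
    by_cases h2 : negSet E ∈ PB Q
    · refine Or.inr (Or.inl ⟨h2, ?_⟩)
      have := sval_negSet (Q := Q) (e := e) (s := s) (negSet E)
      rw [negSet_negSet] at this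
      rw [show sval Q e s E = - sval Q e s (negSet E) by omega, sval_of_mem_PB h2]
      split
      · exact Or.inr (by ring)
      · exact Or.inl (by ring)
    · exact Or.inr (Or.inr ⟨sval_of_not_mem h1 h2, not_mem_NZ hQ hE h1 h2⟩)
  rcases key C hC with ⟨hC1, hC2⟩ | ⟨hC1, hC2⟩ | ⟨hC1, hC2⟩ <;>
    rcases key D hD with ⟨hD1, hD2⟩ | ⟨hD1, hD2⟩ | ⟨hD1, hD2⟩
  -- C in PB, D in PB
  · have h1 := he1 ⟨C, hC1⟩
    have h2 := he1 ⟨D, hD1⟩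
    have heq : e ⟨C, hC1⟩ = e ⟨D, hD1⟩ := by
      rcases hC2 with h3 | h3 <;> rcases hD2 with h4 | h4 <;> omega
    exact congrArg Subtype.val (einj heq)
  -- C in PB, negSet D in PB
  · have h1 := he1 ⟨C, hC1⟩
    have h2 := he1 ⟨negSet D, hD1⟩
    have heq : e ⟨C, hC1⟩ = e ⟨negSet D, hD1⟩ := by
      rcases hC2 with h3 | h3 <;> rcases hD2 with h4 | h4 <;> omega
    have hCD : C = negSet D := congrArg Subtype.val (einj heq)
    have hD' : D = negSet C := by rw [hCD, negSet_negSet]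
    have hcon : sval Q e s D = - sval Q e s C := by rw [hD', sval_negSet]
    rcases hC2 with h3 | h3 <;> omega
  -- C in PB, D self-negative
  · have h1 := he1 ⟨C, hC1⟩
    rcases hC2 with h3 | h3 <;> rw [hD1] at h <;> omega
  -- negSet C in PB, D in PB
  · have h1 := he1 ⟨negSet C, hC1⟩
    have h2 := he1 ⟨D, hD1⟩
    have heq : e ⟨negSet C, hC1⟩ = e ⟨D, hD1⟩ := by
      rcases hC2 with h3 | h3 <;> rcases hD2 with h4 | h4 <;> omega
    have hCD : negSet C = D := congrArg Subtype.val (einj heq)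
    have hC' : C = negSet D := by rw [← hCD, negSet_negSet]
    have hcon : sval Q e s C = - sval Q e s D := by rw [hC', sval_negSet]
    rcases hD2 with h3 | h3 <;> omega
  -- negSet C in PB, negSet D in PB
  · have h1 := he1 ⟨negSet C, hC1⟩
    have h2 := he1 ⟨negSet D, hD1⟩
    have heq : e ⟨negSet C, hC1⟩ = e ⟨negSet D, hD1⟩ := by
      rcases hC2 with h3 | h3 <;> rcases hD2 with h4 | h4 <;> omega
    have hND : negSet C = negSet D := congrArg Subtype.val (einj heq)
    rw [← negSet_negSet C, hND, negSet_negSet]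
  -- negSet C in PB, D self-negative
  · have h1 := he1 ⟨negSet C, hC1⟩
    rcases hC2 with h3 | h3 <;> rw [hD1] at h <;> omega
  -- C self-negative, D in PB
  · have h1 := he1 ⟨D, hD1⟩
    rcases hD2 with h3 | h3 <;> rw [hC1] at h <;> omega
  -- C self-negative, negSet D in PB
  · have h1 := he1 ⟨negSet D, hD1⟩
    rcases hD2 with h3 | h3 <;> rw [hC1] at h <;> omega
  -- both self-negative
  · have h1 : C ∈ Q.parts.filter (fun C => negSet C = C) := Finset.mem_filter.2 ⟨hC, hC2⟩
    have h2 : D ∈ Q.parts.filter (fun C => negSet C = C) := Finset.mem_filter.2 ⟨hD, hD2⟩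
    exact Finset.card_le_one.1 hQ.2 _ h1 _ h2

lemma fibers_sval (hQ : IsSignedPartition n Q) (he1 : ∀ C, 1 ≤ e C)
    (einj : Function.Injective e) :
    fibers n (fun i => sval Q e s (Q.part ((i:ℤ)+1))) = Q := by
  set f := fun i : Fin n => sval Q e s (Q.part ((i:ℤ)+1)) with hf
  have hpart : ∀ x ∈ pmSet n, fib n f (ev n f x) = Q.part x := by
    intro x hx
    ext y
    rw [mem_fib]
    constructor
    · rintro ⟨hy, hev⟩
      rw [show ev n f y = sval Q e s (Q.part y) from ev_sval hQ hy,
        show ev n f x = sval Q e s (Q.part x) from ev_sval hQ hx] at hev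
      have := sval_inj hQ he1 einj (Q.part_mem.2 hy) (Q.part_mem.2 hx) hev
      rw [← this]
      exact Q.mem_part hy
    · intro hy
      have hymem : y ∈ pmSet n := Finset.mem_of_subset (Q.le (Q.part_mem.2 hx)) hy
      refine ⟨hymem, ?_⟩
      rw [show ev n f y = sval Q e s (Q.part y) from ev_sval hQ hymem,
        show ev n f x = sval Q e s (Q.part x) from ev_sval hQ hx,
        Q.part_eq_of_mem (Q.part_mem.2 hx) hy]
  have hparts : (fibers n f).parts = Q.parts := by
    show (pmSet n).image (fun x => fib n f (ev n f x)) = Q.parts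
    rw [Finset.image_congr (g := Q.part) (fun x hx => hpart x (by exact hx))]
    apply Finset.Subset.antisymm
    · intro C hC
      rcases Finset.mem_image.1 hC with ⟨x, hx, rfl⟩
      exact Q.part_mem.2 hx
    · intro C hC
      obtain ⟨y, hy⟩ := Q.nonempty_of_mem_parts hC
      have hys : y ∈ pmSet n := Finset.mem_of_subset (Q.le hC) hy
      exact Finset.mem_image.2 ⟨y, hys, Q.part_eq_of_mem hC hy⟩
  exact Finpartition.ext hparts

lemma bval_parts {f : Fin n → ℤ} (hfib : fibers n f = Q) {C : Finset ℤ}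
    (hC : C ∈ Q.parts) : C = fib n f (bval n f C) := by
  rw [← hfib] at hC
  rcases mem_fibers_parts.1 hC with ⟨x, hx, rfl⟩
  rw [bval_fib ⟨x, mem_fib.2 ⟨hx, rfl⟩⟩]

lemma ev_eq_bval' {f : Fin n → ℤ} (hfib : fibers n f = Q) {C : Finset ℤ}
    (hC : C ∈ Q.parts) {y : ℤ} (hy : y ∈ C) : ev n f y = bval n f C := by
  rw [bval_parts hfib hC, mem_fib] at hy
  exact hy.2

lemma negSet_parts_fib {f : Fin n → ℤ} (hfib : fibers n f = Q) {C : Finset ℤ}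
    (hC : C ∈ Q.parts) : negSet C = fib n f (-(bval n f C)) := by
  conv_lhs => rw [bval_parts hfib hC]
  rw [negSet_fib]

lemma bval_negSet' {f : Fin n → ℤ} (hfib : fibers n f = Q) {C : Finset ℤ}
    (hC : C ∈ Q.parts) : bval n f (negSet C) = - bval n f C := by
  obtain ⟨y, hy⟩ := Q.nonempty_of_mem_parts hC
  have h1 := bval_parts hfib hC
  have hne : (fib n f (-(bval n f C))).Nonempty := by
    refine ⟨-y, ?_⟩
    rw [← negSet_parts_fib hfib hC, mem_negSet, neg_neg]
    exact hy
  rw [negSet_parts_fib hfib hC, bval_fib hne]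

lemma bval_ne_zero {f : Fin n → ℤ} (hfib : fibers n f = Q) {C : Finset ℤ}
    (hC : C ∈ NZ Q) : bval n f C ≠ 0 := by
  intro h0
  have hC' : C ∈ Q.parts := (Finset.mem_filter.1 hC).1
  apply (Finset.mem_filter.1 hC).2
  rw [negSet_parts_fib hfib hC', h0, neg_zero]
  conv_rhs => rw [bval_parts hfib hC', h0]

lemma bval_inj {f : Fin n → ℤ} (hfib : fibers n f = Q) {C D : Finset ℤ}
    (hC : C ∈ Q.parts) (hD : D ∈ Q.parts) (h : bval n f C = bval n f D) : C = D := by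
  rw [bval_parts hfib hC, bval_parts hfib hD, h]

lemma sval_bval {f : Fin n → ℤ} (hQ : IsSignedPartition n Q) (hfib : fibers n f = Q)
    {C : Finset ℤ} (hC : C ∈ Q.parts) :
    sval Q (fun D : {C // C ∈ PB Q} => |bval n f D.1|) (fun D => decide (0 < bval n f D.1)) C
      = bval n f C := by
  have key : ∀ v : ℤ, v ≠ 0 → ((if decide (0 < v) = true then |v| else -|v|) = v) := by
    intro v hv
    rcases hv.lt_or_gt with h | h
    · simp only [decide_eq_true_eq, if_neg (by omega : ¬ (0 < v))]
      rw [abs_of_neg h]; ring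
    · simp only [decide_eq_true_eq, if_pos h]
      exact abs_of_pos h
  by_cases h1 : C ∈ PB Q
  · rw [sval_of_mem_PB h1]
    exact key _ (bval_ne_zero hfib (Finset.mem_filter.1 h1).1)
  by_cases h2 : negSet C ∈ PB Q
  · have e1 : sval Q (fun D : {C // C ∈ PB Q} => |bval n f D.1|)
        (fun D => decide (0 < bval n f D.1)) C
        = - sval Q (fun D : {C // C ∈ PB Q} => |bval n f D.1|)
        (fun D => decide (0 < bval n f D.1)) (negSet C) := by
      have h3 := sval_negSet (Q := Q) (e := fun D : {C // C ∈ PB Q} => |bval n f D.1|)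
        (s := fun D => decide (0 < bval n f D.1)) (C := negSet C)
      rw [negSet_negSet] at h3
      omega
    rw [e1, sval_of_mem_PB h2, key _ (bval_ne_zero hfib (Finset.mem_filter.1 h2).1),
      bval_negSet' hfib hC]
    ring
  · have h3 := bval_negSet' hfib hC
    rw [not_mem_NZ hQ hC h1 h2] at h3
    rw [sval_of_not_mem h1 h2]
    omega

lemma bval_sval (hQ : IsSignedPartition n Q) (he1 : ∀ C, 1 ≤ e C)
    (einj : Function.Injective e) {C : Finset ℤ} (hC : C ∈ Q.parts) :
    bval n (fun i => sval Q e s (Q.part ((i:ℤ)+1))) C = sval Q e s C := by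
  have hfib := fibers_sval hQ he1 einj (s := s)
  obtain ⟨y, hy⟩ := Q.nonempty_of_mem_parts hC
  have hys : y ∈ pmSet n := Finset.mem_of_subset (Q.le hC) hy
  rw [← ev_eq_bval' hfib hC hy,
    show ev n (fun i => sval Q e s (Q.part ((i:ℤ)+1))) y = sval Q e s (Q.part y) from
      ev_sval hQ hys,
    Q.part_eq_of_mem hC hy]

set_option maxHeartbeats 2000000 in
lemma fiber_card {k : ℕ} (hQ : IsSignedPartition n Q) (hk : (NZ Q).card = 2 * k)
    (hkt : k ≤ t) :
    ((Oset n t).filter (fun f => fibers n f = Q)).card = 2 ^ k * t.descFactorial k := by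
  classical
  have hPB : (PB Q).card = k := by
    have := NZ_card_eq hQ
    omega
  set F := (Oset n t).filter (fun f => fibers n f = Q) with hF
  have hmemF : ∀ f : Fin n → ℤ, f ∈ F → (∀ i, |f i| ≤ (t:ℤ)) ∧ fibers n f = Q := by
    intro f hf
    rw [hF, Finset.mem_filter] at hf
    exact ⟨mem_Oset.1 hf.1, hf.2⟩
  have hmain : Fintype.card {f // f ∈ F} =
      Fintype.card (({C // C ∈ PB Q} ↪ {v // v ∈ Finset.Icc (1:ℤ) (t:ℤ)})
        × ({C // C ∈ PB Q} → Bool)) := by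
    apply Fintype.card_congr
    refine
      { toFun := fun fh =>
          (⟨fun C => ⟨|bval n fh.1 C.1|, ?_⟩, ?_⟩,
            fun C => decide (0 < bval n fh.1 C.1)),
        invFun := fun es =>
          ⟨fun i => sval Q (fun C => ((es.1 C : ℤ))) es.2 (Q.part ((i:ℤ)+1)), ?_⟩,
        left_inv := ?_, right_inv := ?_ }
    -- membership of the absolute value in `Icc 1 t`
    · obtain ⟨hO, hfib⟩ := hmemF fh.1 fh.2
      have h1 : bval n fh.1 C.1 ≠ 0 := bval_ne_zero hfib (Finset.mem_filter.1 C.2).1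
      have h2 := bval_abs_le hO C.1
      rw [Finset.mem_Icc]
      exact ⟨Int.one_le_abs h1, h2⟩
    -- injectivity
    · intro C D hCD
      obtain ⟨hO, hfib⟩ := hmemF fh.1 fh.2
      have habs : |bval n fh.1 C.1| = |bval n fh.1 D.1| := congrArg Subtype.val hCD
      have hCp : C.1 ∈ Q.parts := PB_subset_parts C.2
      have hDp : D.1 ∈ Q.parts := PB_subset_parts D.2
      rcases abs_eq_abs.1 habs with h | h
      · exact Subtype.ext (bval_inj hfib hCp hDp h)
      · exfalso
        have h4 : bval n fh.1 C.1 = bval n fh.1 (negSet D.1) := by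
          rw [bval_negSet' hfib hDp]
          omega
        have h5 : C.1 = negSet D.1 := bval_inj hfib hCp (hQ.1 _ hDp) h4
        exact not_negSet_mem_PB D.2 (h5 ▸ C.2)
    -- the constructed function lies in `F`
    · rw [hF, Finset.mem_filter]
      have he1 : ∀ C : {C // C ∈ PB Q}, 1 ≤ ((es.1 C : ℤ)) := fun C =>
        (Finset.mem_Icc.1 (es.1 C).2).1
      have heinj : Function.Injective (fun C : {C // C ∈ PB Q} => ((es.1 C : ℤ))) :=
        fun C D h => es.1.injective (Subtype.ext h)
      constructor
      · rw [mem_Oset]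
        intro i
        apply sval_abs_le (fun C => ?_)
        have h2 := Finset.mem_Icc.1 (es.1 C).2
        rw [abs_le]
        omega
      · exact fibers_sval hQ he1 heinj
    · intro fh
      obtain ⟨hO, hfib⟩ := hmemF fh.1 fh.2
      apply Subtype.ext
      funext i
      beta_reduce
      simp only [Function.Embedding.coeFn_mk]
      have hpt := pt_mem (n := n) i
      have h1 : Q.part ((i:ℤ)+1) ∈ Q.parts := Q.part_mem.2 hpt
      have h2 := sval_bval (f := fh.1) hQ hfib h1
      change sval Q (fun D : {C // C ∈ PB Q} => |bval n fh.1 D.1|)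
        (fun D => decide (0 < bval n fh.1 D.1)) (Q.part ((i:ℤ)+1)) = fh.1 i
      rw [h2, ← ev_eq_bval' hfib h1 (Q.mem_part hpt), ev_pos]
    -- right inverse
    · intro es
      have he1 : ∀ C : {C // C ∈ PB Q}, 1 ≤ ((es.1 C : ℤ)) := fun C =>
        (Finset.mem_Icc.1 (es.1 C).2).1
      have heinj : Function.Injective (fun C : {C // C ∈ PB Q} => ((es.1 C : ℤ))) :=
        fun C D h => es.1.injective (Subtype.ext h)
      have key : ∀ C : {C // C ∈ PB Q},
          bval n (fun i => sval Q (fun C => ((es.1 C : ℤ))) es.2 (Q.part ((i:ℤ)+1))) C.1 =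
            (if es.2 C then ((es.1 C : ℤ)) else -((es.1 C : ℤ))) := by
        intro C
        rw [bval_sval hQ he1 heinj (PB_subset_parts C.2)]
        obtain ⟨C, hC⟩ := C
        rw [sval_of_mem_PB hC]
      beta_reduce
      apply Prod.ext
      · apply DFunLike.ext
        intro C
        apply Subtype.ext
        simp only [Function.Embedding.coeFn_mk]
        change |bval n (fun i => sval Q (fun C => ((es.1 C : ℤ))) es.2 (Q.part ((i:ℤ)+1))) C.1|
          = ((es.1 C : ℤ))
        rw [key C]
        have h1 := he1 C
        split
        · exact abs_of_pos (by omega)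
        · rw [abs_neg]
          exact abs_of_pos (by omega)
      · funext C
        show decide (0 < bval n
          (fun i => sval Q (fun C => ((es.1 C : ℤ))) es.2 (Q.part ((i:ℤ)+1))) C.1) = es.2 C
        rw [key C]
        have h1 := he1 C
        cases hb : es.2 C
        · rw [if_neg (by simp [hb])]
          simp only [decide_eq_false_iff_not, not_lt]
          omega
        · rw [if_pos (by simp [hb])]
          simp only [decide_eq_true_eq]
          omega
  have hL : Fintype.card (({C // C ∈ PB Q} ↪ {v // v ∈ Finset.Icc (1:ℤ) (t:ℤ)})
      × ({C // C ∈ PB Q} → Bool)) = t.descFactorial k * 2 ^ k := by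
    rw [Fintype.card_prod, Fintype.card_embedding_eq, Fintype.card_fun]
    have hc1 : Fintype.card {C // C ∈ PB Q} = k := by
      rw [Fintype.card_coe, hPB]
    have hc2 : Fintype.card {v // v ∈ Finset.Icc (1:ℤ) (t:ℤ)} = t := by
      rw [Fintype.card_coe, Int.card_Icc]
      omega
    rw [hc1, hc2, Fintype.card_bool]
  have := (Fintype.card_coe F).symm.trans (hmain.trans hL)
  rw [this, mul_comm]

lemma kfun_le_t {f : Fin n → ℤ} (hf : f ∈ Oset n t) :
    ((Vset n f).filter (fun v => 0 < v)).card ≤ t := by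
  rw [Vset_pos_eq]
  have hsub : (Finset.univ.image (fun i => |f i|)).erase 0 ⊆ Finset.Icc 1 (t:ℤ) := by
    intro v hv
    rw [Finset.mem_erase] at hv
    rcases Finset.mem_image.1 hv.2 with ⟨i, _, rfl⟩
    rw [Finset.mem_Icc]
    have h1 := mem_Oset.1 hf i
    have h2 := abs_nonneg (f i)
    have h3 := hv.1
    omega
  calc ((Finset.univ.image (fun i => |f i|)).erase 0).card
      ≤ (Finset.Icc 1 (t:ℤ)).card := Finset.card_le_card hsub
    _ = t := by rw [Int.card_Icc]; omega

lemma kfun_le_n (f : Fin n → ℤ) :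
    ((Vset n f).filter (fun v => 0 < v)).card ≤ n := by
  rw [Vset_pos_eq]
  calc ((Finset.univ.image (fun i => |f i|)).erase 0).card
      ≤ (Finset.univ.image (fun i => |f i|)).card :=
        Finset.card_le_card (Finset.erase_subset _ _)
    _ ≤ (Finset.univ : Finset (Fin n)).card := Finset.card_image_le
    _ = n := by simp

set_option maxHeartbeats 1000000 in
lemma count_eq (n t : ℕ) :
    (2*t+1)^n = ∑ k ∈ Finset.range (n+1), SB n k * (2^k * t.descFactorial k) := by
  classical
  rw [← Oset_card (n := n) (t := t)]
  have h0 : ∀ f : Fin n → ℤ, (NZ (fibers n f)).card =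
      2 * ((Vset n f).filter (fun v => 0 < v)).card :=
    fun f => (NZ_fibers_card f).trans (Vset_card_eq f)
  rw [Finset.card_eq_sum_card_fiberwise
    (f := fun f => ((Vset n f).filter (fun v => 0 < v)).card)
    (t := Finset.range (n+1))
    (fun f _ => Finset.mem_range.2 (Nat.lt_succ_of_le (kfun_le_n f)))]
  apply Finset.sum_congr rfl
  intro k hk
  rcases le_or_gt k t with hkt | hkt
  · -- main case
    set Fk := (Oset n t).filter
      (fun f => ((Vset n f).filter (fun v => 0 < v)).card = k) with hFk
    set T := Fk.image (fibers n) with hT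
    have hfilt : ∀ Q ∈ T, Fk.filter (fun f => fibers n f = Q) =
        (Oset n t).filter (fun f => fibers n f = Q) := by
      intro Q hQ
      rcases Finset.mem_image.1 hQ with ⟨f0, hf0, rfl⟩
      have hf0k : ((Vset n f0).filter (fun v => 0 < v)).card = k :=
        (Finset.mem_filter.1 hf0).2
      rw [hFk, Finset.filter_filter]
      apply Finset.filter_congr
      intro f hf
      constructor
      · rintro ⟨_, h⟩; exact h
      · intro h
        refine ⟨?_, h⟩
        have := h0 f
        rw [h] at this
        have h2 := h0 f0
        omega
    have hprops : ∀ Q ∈ T, IsSignedPartition n Q ∧ (NZ Q).card = 2 * k := by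
      intro Q hQ
      rcases Finset.mem_image.1 hQ with ⟨f0, hf0, rfl⟩
      have hf0k : ((Vset n f0).filter (fun v => 0 < v)).card = k :=
        (Finset.mem_filter.1 hf0).2
      exact ⟨fibers_signed f0, by rw [h0 f0, hf0k]⟩
    have hsum : Fk.card = ∑ Q ∈ T, (Fk.filter (fun f => fibers n f = Q)).card :=
      Finset.card_eq_sum_card_image _ _
    have hterm : ∀ Q ∈ T, (Fk.filter (fun f => fibers n f = Q)).card =
        2 ^ k * t.descFactorial k := by
      intro Q hQ
      rw [hfilt Q hQ]
      exact fiber_card (hprops Q hQ).1 (hprops Q hQ).2 hkt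
    rw [hsum, Finset.sum_congr rfl hterm, Finset.sum_const, smul_eq_mul]
    congr 1
    -- T.card = SB n k
    have hiff : ∀ P : Finpartition (pmSet n),
        (IsSignedPartition n P ∧ (P.parts.filter (fun C => negSet C ≠ C)).card = 2*k) ↔
          P ∈ T := by
      intro P
      constructor
      · rintro ⟨hsig, hcard⟩
        have hcard' : (NZ P).card = 2 * k := hcard
        have hpos : 0 < 2 ^ k * t.descFactorial k := by
          apply Nat.mul_pos (Nat.pow_pos (n := k) (by norm_num))
          rcases Nat.eq_zero_or_pos (t.descFactorial k) with h | h
          · rw [Nat.descFactorial_eq_zero_iff_lt] at h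
            omega
          · exact h
        have hne : ((Oset n t).filter (fun f => fibers n f = P)).Nonempty := by
          rw [← Finset.card_pos, fiber_card hsig hcard' hkt]
          exact hpos
        obtain ⟨f, hf⟩ := hne
        rw [Finset.mem_filter] at hf
        refine Finset.mem_image.2 ⟨f, ?_, hf.2⟩
        rw [hFk, Finset.mem_filter]
        refine ⟨hf.1, ?_⟩
        have := h0 f
        rw [hf.2] at this
        omega
      · intro hP
        obtain ⟨hsig, hcard⟩ := hprops P hP
        exact ⟨hsig, hcard⟩
    rw [SB, Nat.card_congr (Equiv.subtypeEquivRight hiff), Nat.card_eq_fintype_card,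
      Fintype.card_coe]
  · -- degenerate case `k > t`
    have hdesc : t.descFactorial k = 0 := Nat.descFactorial_eq_zero_iff_lt.2 hkt
    have hempty : (Oset n t).filter
        (fun f => ((Vset n f).filter (fun v => 0 < v)).card = k) = ∅ := by
      rw [Finset.filter_eq_empty_iff]
      intro f hf hk'
      have := kfun_le_t hf
      omega
    rw [hempty, hdesc]
    simp

lemma desc_cast (t k : ℕ) :
    ((t.descFactorial k : ℤ)) = ∏ j ∈ Finset.range k, ((t:ℤ) - j) := by
  induction k with
  | zero => simp
  | succ k ih =>
    rw [Nat.descFactorial_succ, Finset.prod_range_succ, ← ih, Nat.cast_mul]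
    rcases le_or_gt k t with h | h
    · rw [Nat.cast_sub h]
      push_cast
      ring
    · rw [Nat.descFactorial_eq_zero_iff_lt.2 h]
      simp

lemma prod_eq (t k : ℕ) :
    ((2^k * t.descFactorial k : ℕ) : ℤ) =
      ∏ j ∈ Finset.range k, (((2*t+1 : ℕ) : ℤ) - (2 * j + 1)) := by
  have h1 : ∀ j ∈ Finset.range k, (((2*t+1 : ℕ) : ℤ) - (2 * (j:ℤ) + 1)) =
      2 * ((t:ℤ) - j) := by
    intro j _
    push_cast
    ring
  rw [Finset.prod_congr rfl h1, Finset.prod_mul_distrib, Finset.prod_const,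
    Finset.card_range, ← desc_cast]
  push_cast
  ring

end Main

end SignedAux

/-- For every natural `n` and odd natural `m`:
`m^n = Σ_{k=0}^{n} S_B(n,k) · (m-1)(m-3)⋯(m-2k+1)` (over the integers). -/
theorem typeB_stirling_identity_odd (n m : ℕ) (hm : Odd m) :
    (m : ℤ) ^ n = ∑ k ∈ Finset.range (n + 1),
      (SB n k : ℤ) * ∏ j ∈ Finset.range k, ((m : ℤ) - (2 * j + 1)) := by
  classical
  obtain ⟨t, rfl⟩ := hm
  have h := SignedAux.count_eq n t
  have h2 : ((2*t+1 : ℕ) : ℤ)^n = ∑ k ∈ Finset.range (n+1),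
      (SB n k : ℤ) * (((2^k * t.descFactorial k : ℕ) : ℤ)) := by
    rw [← Nat.cast_pow, h, Nat.cast_sum]
    apply Finset.sum_congr rfl
    intro k _
    push_cast
    ring
  rw [h2]
  apply Finset.sum_congr rfl
  intro k _
  rw [SignedAux.prod_eq]
end

section
/- For all natural numbers n, k, the Stirling number of type B of the second kind admits the explicit formula S_B(n,k) = (1/(2^k · k!)) · Σ_{j=0}^{k} (-1)^j · C(k,j) · (2k - 2j + 1)^n; equivalently, 2^k · k! · S_B(n,k) = Σ_{j=0}^{k} (-1)^j · C(k,j) · (2(k-j)+1)^n. -/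
open Finset

/-- Type-B Stirling numbers of the second kind, defined by the recurrence
`S_B(n+1,k) = S_B(n,k-1) + (2k+1)·S_B(n,k)`, `S_B(n,0) = 1`, `S_B(0,k) = 0` for `k ≥ 1`. -/
def SBrec : ℕ → ℕ → ℕ
  | _, 0 => 1
  | 0, _ + 1 => 0
  | n + 1, k + 1 => SBrec n k + (2 * (k + 1) + 1) * SBrec n (k + 1)

lemma key (n k : ℕ) :
    ∑ j ∈ Finset.range (k + 2),
        (-1) ^ j * (Nat.choose (k+1) j : ℤ) * (2 * ((k+1 : ℤ) - j) + 1) ^ (n+1)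
    = 2 * (k+1) * (∑ j ∈ Finset.range (k + 1),
        (-1) ^ j * (Nat.choose k j : ℤ) * (2 * ((k : ℤ) - j) + 1) ^ n)
    + (2 * k + 3) * (∑ j ∈ Finset.range (k + 2),
        (-1) ^ j * (Nat.choose (k+1) j : ℤ) * (2 * ((k+1 : ℤ) - j) + 1) ^ n) := by
  have h1 : ∑ j ∈ Finset.range (k + 2),
      (-1) ^ j * (Nat.choose (k+1) j : ℤ) * (2 * ((k+1 : ℤ) - j) + 1) ^ (n+1)
      = (2 * k + 3) * (∑ j ∈ Finset.range (k + 2),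
          (-1) ^ j * (Nat.choose (k+1) j : ℤ) * (2 * ((k+1 : ℤ) - j) + 1) ^ n)
      + (-2) * (∑ j ∈ Finset.range (k + 2),
          (j : ℤ) * ((-1) ^ j * (Nat.choose (k+1) j : ℤ) * (2 * ((k+1 : ℤ) - j) + 1) ^ n)) := by
    rw [Finset.mul_sum, Finset.mul_sum, ← Finset.sum_add_distrib]
    refine Finset.sum_congr rfl fun j _ => ?_
    have : (2 * ((k+1 : ℤ) - j) + 1) ^ (n+1)
        = (2 * ((k+1 : ℤ) - j) + 1) * (2 * ((k+1 : ℤ) - j) + 1) ^ n := by ring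
    rw [this]; ring
  have h2 : ∑ j ∈ Finset.range (k + 2),
      (j : ℤ) * ((-1) ^ j * (Nat.choose (k+1) j : ℤ) * (2 * ((k+1 : ℤ) - j) + 1) ^ n)
      = -(k+1) * (∑ j ∈ Finset.range (k + 1),
          (-1) ^ j * (Nat.choose k j : ℤ) * (2 * ((k : ℤ) - j) + 1) ^ n) := by
    rw [Finset.sum_range_succ']
    simp only [Nat.cast_zero, zero_mul, add_zero]
    rw [Finset.mul_sum]
    refine Finset.sum_congr rfl fun i _ => ?_
    have hc : ((i:ℤ) + 1) * (Nat.choose (k+1) (i+1) : ℤ) = (k + 1) * (Nat.choose k i : ℤ) := by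
      have := Nat.add_one_mul_choose_eq k i
      have : ((k+1) * Nat.choose k i : ℤ) = (Nat.choose (k+1) (i+1) * (i+1) : ℤ) := by
        exact_mod_cast congrArg (Nat.cast : ℕ → ℤ) this
      linarith
    push_cast
    have he : (2 * ((k:ℤ) + 1 - (i + 1)) + 1) = (2 * ((k:ℤ) - i) + 1) := by ring
    rw [he, pow_succ]
    linear_combination (-(-1:ℤ)^i * (2*((k:ℤ)-i)+1)^n) * hc
  rw [h1, h2]; ring

/-- Explicit formula for the type-B Stirling numbers of the second kind:
`2^k · k! · S_B(n,k) = Σ_{j=0}^{k} (-1)^j · C(k,j) · (2(k-j)+1)^n`. -/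
theorem SBrec_explicit_formula (n k : ℕ) :
    (2 ^ k * Nat.factorial k * SBrec n k : ℤ) =
      ∑ j ∈ Finset.range (k + 1),
        (-1) ^ j * (Nat.choose k j : ℤ) * (2 * ((k : ℤ) - j) + 1) ^ n := by
  induction n generalizing k with
  | zero =>
    cases k with
    | zero => simp [SBrec]
    | succ m =>
      simp only [SBrec, pow_zero, mul_one, Nat.cast_zero, mul_zero]
      have := Int.alternating_sum_range_choose (n := m + 1)
      simp at this
      exact this.symm
  | succ n ih =>
    cases k with
    | zero => simp [SBrec]
    | succ m =>
      have h1 := ih m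
      have h2 := ih (m+1)
      have hk := key n m
      simp only [SBrec]
      push_cast [Nat.factorial_succ]
      push_cast [Nat.factorial_succ] at h1 h2 hk
      linear_combination 2*((m:ℤ)+1)*h1 + (2*(m:ℤ)+3)*h2 - hk
end

section
/- For all natural numbers n and k, S_B(n,k) = Σ_{j=k}^{n} C(n,j) · 2^{j-k} · S(j,k), where S(j,k) is the ordinary Stirling number of the second kind and C(n,j) the binomial coefficient. -/
open Finset

/-- `stirling n k`: the Stirling number of the second kind, the number of set
partitions of an `n`-element set into exactly `k` (nonempty) blocks. -/
noncomputable def stirling (n k : ℕ) : ℕ :=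
  Nat.card {P : Finpartition (Finset.range n) // P.parts.card = k}

namespace SBaux

variable {n k : ℕ}

lemma not_mem_of_mem_parts {P : Finpartition (range n)} {t : Finset ℕ} (ht : t ∈ P.parts) :
    n ∉ t := fun hn => (Nat.lt_irrefl n) (Finset.mem_range.mp (P.le ht hn))

lemma avoid_parts_eq {s t : Finset ℕ} (P : Finpartition s) (ht : t ∈ P.parts) :
    (P.avoid t).parts = P.parts.erase t := by
  ext u
  rw [Finpartition.mem_avoid, mem_erase]
  constructor
  · rintro ⟨d, hd, hdt, rfl⟩
    have hne : d ≠ t := fun h => hdt (h ▸ le_rfl)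
    rw [Disjoint.sdiff_eq_left (show Disjoint d t from P.disjoint hd ht hne)]
    exact ⟨hne, hd⟩
  · rintro ⟨hne, hu⟩
    have hdisj : Disjoint u t := P.disjoint hu ht hne
    exact ⟨u, hu, fun h => P.ne_bot hu (hdisj.eq_bot_of_le h), hdisj.sdiff_eq_left⟩

/-- Add `{n}` as a new singleton part. -/
def addS (P : Finpartition (range n)) : Finpartition (range (n + 1)) :=
  P.extend (b := {n}) (by simp)
    (by simp [Finset.disjoint_singleton_right])
    (by rw [sup_eq_union, union_comm, ← insert_eq, ← range_add_one])

lemma addS_parts (P : Finpartition (range n)) : (addS P).parts = insert {n} P.parts := rfl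

/-- Add `n` to the existing part `t`. -/
def addT (P : Finpartition (range n)) (t : Finset ℕ) (ht : t ∈ P.parts) :
    Finpartition (range (n + 1)) :=
  (P.avoid t).extend (b := insert n t) (by simp)
    (by
      rw [Finset.disjoint_insert_right]
      exact ⟨by simp, sdiff_disjoint⟩)
    (by rw [sup_eq_union, union_insert, sdiff_union_of_subset (P.le ht), range_add_one])

lemma addT_parts (P : Finpartition (range n)) (t : Finset ℕ) (ht : t ∈ P.parts) :
    (addT P t ht).parts = insert (insert n t) (P.parts.erase t) := by
  show insert (insert n t) (P.avoid t).parts = _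
  rw [avoid_parts_eq P ht]

lemma singleton_not_mem (P : Finpartition (range n)) : ({n} : Finset ℕ) ∉ P.parts :=
  fun h => not_mem_of_mem_parts h (mem_singleton_self n)

lemma insert_not_mem (P : Finpartition (range n)) (t : Finset ℕ) :
    insert n t ∉ P.parts := fun h => not_mem_of_mem_parts h (mem_insert_self n t)

/-- The forward map of the Stirling recurrence bijection. -/
def F (n k : ℕ) :
    {P : Finpartition (range n) // P.parts.card = k} ⊕
      (Σ P : {P : Finpartition (range n) // P.parts.card = k + 1}, {t // t ∈ P.1.parts}) →
    {P : Finpartition (range (n + 1)) // P.parts.card = k + 1}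
  | Sum.inl P => ⟨addS P.1, by
      rw [addS_parts, card_insert_of_notMem (singleton_not_mem P.1), P.2]⟩
  | Sum.inr ⟨P, t, ht⟩ => ⟨addT P.1 t ht, by
      rw [addT_parts,
        card_insert_of_notMem (fun h => insert_not_mem P.1 t (mem_of_mem_erase h)),
        card_erase_of_mem ht, P.2]
      omega⟩

lemma F_inj : Function.Injective (F n k) := by
  rintro (⟨P, hP⟩ | ⟨⟨P, hP⟩, t, ht⟩) (⟨Q, hQ⟩ | ⟨⟨Q, hQ⟩, u, hu⟩) h <;>
    have hparts := congrArg (fun x => Finpartition.parts x.1) h <;>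
    simp only [F, addS_parts, addT_parts] at hparts
  · -- inl inl
    have : P.parts = Q.parts := by
      rw [← erase_insert (singleton_not_mem P), hparts, erase_insert (singleton_not_mem Q)]
    simp only [Sum.inl.injEq, Subtype.mk.injEq]
    exact Finpartition.ext this
  · -- inl inr : contradiction
    exfalso
    have hmem : ({n} : Finset ℕ) ∈ insert (insert n u) (Q.parts.erase u) := by
      rw [← hparts]; exact mem_insert_self _ _
    rcases mem_insert.1 hmem with h1 | h1
    · have hnu : n ∉ u := not_mem_of_mem_parts hu
      have : u ⊆ {n} := by
        intro x hx
        have : x ∈ insert n u := mem_insert_of_mem hx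
        rw [← h1] at this; exact this
      rcases Finset.subset_singleton_iff.1 this with rfl | rfl
      · exact (Q.nonempty_of_mem_parts hu).ne_empty rfl
      · exact hnu (mem_singleton_self n)
    · exact singleton_not_mem Q (mem_of_mem_erase h1)
  · -- inr inl : contradiction
    exfalso
    have hmem : ({n} : Finset ℕ) ∈ insert (insert n t) (P.parts.erase t) := by
      rw [hparts]; exact mem_insert_self _ _
    rcases mem_insert.1 hmem with h1 | h1
    · have hnt : n ∉ t := not_mem_of_mem_parts ht
      have : t ⊆ {n} := by
        intro x hx
        have : x ∈ insert n t := mem_insert_of_mem hx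
        rw [← h1] at this; exact this
      rcases Finset.subset_singleton_iff.1 this with rfl | rfl
      · exact (P.nonempty_of_mem_parts ht).ne_empty rfl
      · exact hnt (mem_singleton_self n)
    · exact singleton_not_mem P (mem_of_mem_erase h1)
  · -- inr inr
    have hmem : insert n t ∈ insert (insert n u) (Q.parts.erase u) := by
      rw [← hparts]; exact mem_insert_self _ _
    have htu : insert n t = insert n u := by
      rcases mem_insert.1 hmem with h1 | h1
      · exact h1
      · exact absurd (mem_of_mem_erase h1) (insert_not_mem Q t)
    have ht' : t = u := by
      rw [← erase_insert (not_mem_of_mem_parts ht), htu,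
        erase_insert (not_mem_of_mem_parts hu)]
    subst ht'
    have herase : P.parts.erase t = Q.parts.erase t := by
      rw [← erase_insert (fun h => insert_not_mem P t (mem_of_mem_erase h)) (s := P.parts.erase t),
        hparts, erase_insert (fun h => insert_not_mem Q t (mem_of_mem_erase h))]
    have hPQ : P.parts = Q.parts := by
      rw [← insert_erase ht, herase, insert_erase hu]
    have : P = Q := Finpartition.ext hPQ
    subst this
    rfl

lemma range_succ_sdiff : range (n + 1) \ {n} = range n := by
  rw [range_add_one, sdiff_singleton_eq_erase, erase_insert (by simp)]

lemma F_surj : Function.Surjective (F n k) := by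
  rintro ⟨Q, hQ⟩
  have hn1 : n ∈ range (n + 1) := self_mem_range_succ n
  set t := Q.part n with htdef
  have ht : t ∈ Q.parts := Q.part_mem.2 hn1
  have hnt : n ∈ t := Q.mem_part hn1
  set R : Finpartition (range n) := (Q.avoid {n}).copy range_succ_sdiff with hRdef
  have hmemR : ∀ u : Finset ℕ, u ∈ R.parts ↔ ∃ d ∈ Q.parts, ¬d ⊆ {n} ∧ d \ {n} = u := by
    intro u
    show u ∈ (Q.avoid {n}).parts ↔ _
    rw [Finpartition.mem_avoid]
  have hmemn : ∀ d ∈ Q.parts, n ∈ d → d = t := fun d hd hnd =>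
    (Q.part_eq_of_mem hd hnd).symm
  by_cases hA : t = {n}
  · -- n is a singleton part
    have hRparts : R.parts = Q.parts.erase t := by
      ext u
      rw [hmemR, mem_erase]
      constructor
      · rintro ⟨d, hd, hsub, rfl⟩
        have hdt : d ≠ t := fun h => hsub (by rw [h, hA])
        have hnd : n ∉ d := fun h => hdt (hmemn d hd h)
        rw [Disjoint.sdiff_eq_left (by simpa [Finset.disjoint_singleton_right] using hnd)]
        exact ⟨hdt, hd⟩
      · rintro ⟨hne, hu⟩
        have hnu : n ∉ u := fun h => hne (hmemn u hu h)
        refine ⟨u, hu, ?_, Disjoint.sdiff_eq_left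
          (by simpa [Finset.disjoint_singleton_right] using hnu)⟩
        intro hsub
        rcases Finset.subset_singleton_iff.1 hsub with rfl | rfl
        · exact (Q.nonempty_of_mem_parts hu).ne_empty rfl
        · exact hnu (mem_singleton_self n)
    have hcard : R.parts.card = k := by
      rw [hRparts, card_erase_of_mem ht, hQ]; rfl
    refine ⟨Sum.inl ⟨R, hcard⟩, ?_⟩
    apply Subtype.ext
    apply Finpartition.ext
    show insert {n} R.parts = Q.parts
    rw [hRparts, ← hA, insert_erase ht]
  · -- n is in a bigger part
    set s := t.erase n with hsdef
    have hns : n ∉ s := notMem_erase n t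
    have hsne : s.Nonempty := by
      rw [nonempty_iff_ne_empty]
      intro h
      rcases (Finset.erase_eq_empty_iff t n).1 h with h1 | h1
      · exact (Q.nonempty_of_mem_parts ht).ne_empty h1
      · exact hA h1
    have hsub : ¬t ⊆ {n} := by
      intro hsub
      rcases Finset.subset_singleton_iff.1 hsub with h1 | h1
      · exact (Q.nonempty_of_mem_parts ht).ne_empty h1
      · exact hA h1
    have hRparts : R.parts = insert s (Q.parts.erase t) := by
      ext u
      rw [hmemR, mem_insert, mem_erase]
      constructor
      · rintro ⟨d, hd, hsubd, rfl⟩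
        by_cases hdt : d = t
        · subst hdt
          left; rw [sdiff_singleton_eq_erase]
        · have hnd : n ∉ d := fun h => hdt (hmemn d hd h)
          right
          rw [Disjoint.sdiff_eq_left (by simpa [Finset.disjoint_singleton_right] using hnd)]
          exact ⟨hdt, hd⟩
      · rintro (rfl | ⟨hne, hu⟩)
        · exact ⟨t, ht, hsub, by rw [sdiff_singleton_eq_erase]⟩
        · have hnu : n ∉ u := fun h => hne (hmemn u hu h)
          refine ⟨u, hu, ?_, Disjoint.sdiff_eq_left
            (by simpa [Finset.disjoint_singleton_right] using hnu)⟩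
          intro hsubu
          rcases Finset.subset_singleton_iff.1 hsubu with rfl | rfl
          · exact (Q.nonempty_of_mem_parts hu).ne_empty rfl
          · exact hnu (mem_singleton_self n)
    have hsnotin : s ∉ Q.parts.erase t := by
      intro h
      have hs' : s ∈ Q.parts := mem_of_mem_erase h
      have hsne' : s ≠ t := ne_of_mem_erase h
      have : Disjoint s t := Q.disjoint hs' ht hsne'
      exact hsne.ne_empty (this.eq_bot_of_le (erase_subset n t))
    have hcard : R.parts.card = k + 1 := by
      rw [hRparts, card_insert_of_notMem hsnotin, card_erase_of_mem ht, hQ]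
      omega
    have hsR : s ∈ R.parts := by rw [hRparts]; exact mem_insert_self _ _
    refine ⟨Sum.inr ⟨⟨R, hcard⟩, s, hsR⟩, ?_⟩
    apply Subtype.ext
    apply Finpartition.ext
    show (addT R s hsR).parts = Q.parts
    rw [addT_parts, insert_erase hnt, hRparts, erase_insert hsnotin, insert_erase ht]

lemma stirling_succ (n k : ℕ) :
    stirling (n + 1) (k + 1) = stirling n k + (k + 1) * stirling n (k + 1) := by
  have hbij : Function.Bijective (F n k) := ⟨F_inj, F_surj⟩
  have h := Nat.card_eq_of_bijective (F n k) hbij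
  rw [stirling, ← h, Nat.card_sum]
  congr 1
  rw [Nat.card_eq_fintype_card, Fintype.card_sigma]
  have : ∀ P : {P : Finpartition (range n) // P.parts.card = k + 1},
      Fintype.card {t // t ∈ P.1.parts} = k + 1 := fun P => by
    rw [Fintype.card_coe]; exact P.2
  rw [Finset.sum_congr rfl (fun P _ => this P), Finset.sum_const, smul_eq_mul,
    stirling, Nat.card_eq_fintype_card, ← Finset.card_univ, mul_comm]


lemma stirling_zero_zero : stirling 0 0 = 1 := by
  rw [stirling, Nat.card_eq_one_iff_unique]
  constructor
  · constructor
    rintro ⟨P, hP⟩ ⟨Q, hQ⟩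
    have h1 : P.parts = ∅ := Finpartition.parts_eq_empty_iff.2 (by simp)
    have h2 : Q.parts = ∅ := Finpartition.parts_eq_empty_iff.2 (by simp)
    exact Subtype.ext (Finpartition.ext (h1.trans h2.symm))
  · exact ⟨⟨(Finpartition.empty (Finset ℕ)).copy (by simp), by
      simp [Finpartition.empty]⟩⟩

lemma stirling_succ_zero (n : ℕ) : stirling (n + 1) 0 = 0 := by
  rw [stirling]
  have : IsEmpty {P : Finpartition (range (n + 1)) // P.parts.card = 0} := by
    constructor
    rintro ⟨P, hP⟩
    have : P.parts = ∅ := card_eq_zero.1 hP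
    have h := Finpartition.parts_eq_empty_iff.1 this
    have : n ∈ range (n + 1) := self_mem_range_succ n
    rw [h] at this
    simpa using this
  exact Nat.card_of_isEmpty

lemma parts_card_le {n : ℕ} (P : Finpartition (range n)) : P.parts.card ≤ n := by
  calc P.parts.card = ∑ _i ∈ P.parts, 1 := by simp
    _ ≤ ∑ i ∈ P.parts, i.card :=
        Finset.sum_le_sum fun i hi => (P.nonempty_of_mem_parts hi).card_pos
    _ = (range n).card := P.sum_card_parts
    _ = n := card_range n

lemma stirling_of_lt {n k : ℕ} (h : n < k) : stirling n k = 0 := by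
  rw [stirling]
  have : IsEmpty {P : Finpartition (range n) // P.parts.card = k} := by
    constructor
    rintro ⟨P, hP⟩
    exact absurd (hP ▸ parts_card_le P) (by omega)
  exact Nat.card_of_isEmpty


end SBaux

open SBaux

/-- `S_B(n,k) = Σ_{j=k}^{n} C(n,j) · 2^{j-k} · S(j,k)`, relating the type-B
Stirling numbers of the second kind to the ordinary ones. -/
theorem SBrec_eq_sum_stirling (n k : ℕ) :
    SBrec n k = ∑ j ∈ Finset.Icc k n,
      Nat.choose n j * 2 ^ (j - k) * stirling j k := by
  induction n generalizing k with
  | zero =>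
    cases k with
    | zero => simp [SBrec, stirling_zero_zero]
    | succ k =>
      rw [Finset.Icc_eq_empty (by omega)]
      simp [SBrec]
  | succ n ih =>
    cases k with
    | zero =>
      have hL : SBrec (n + 1) 0 = 1 := rfl
      rw [hL, Finset.sum_eq_single_of_mem 0 (by simp)]
      · simp [stirling_zero_zero]
      · intro j hj hj0
        obtain ⟨i, rfl⟩ := Nat.exists_eq_succ_of_ne_zero hj0
        simp [stirling_succ_zero]
    | succ k =>
      have hrec : SBrec (n + 1) (k + 1)
          = SBrec n k + (2 * (k + 1) + 1) * SBrec n (k + 1) := rfl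
      rw [hrec, ih k, ih (k + 1)]
      -- Pascal split on the RHS
      have pascal : ∀ j ∈ Finset.Icc (k + 1) (n + 1),
          Nat.choose (n + 1) j * 2 ^ (j - (k + 1)) * stirling j (k + 1)
          = Nat.choose n (j - 1) * 2 ^ (j - (k + 1)) * stirling j (k + 1)
            + Nat.choose n j * 2 ^ (j - (k + 1)) * stirling j (k + 1) := by
        intro j hj
        obtain ⟨i, rfl⟩ : ∃ i, j = i + 1 := ⟨j - 1, by
          have := (Finset.mem_Icc.1 hj).1; omega⟩
        rw [Nat.choose_succ_succ, Nat.add_sub_cancel, add_mul, add_mul]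
      rw [Finset.sum_congr rfl pascal, Finset.sum_add_distrib]
      -- second piece: top term vanishes
      have h2 : ∑ j ∈ Finset.Icc (k + 1) (n + 1),
            Nat.choose n j * 2 ^ (j - (k + 1)) * stirling j (k + 1)
          = ∑ j ∈ Finset.Icc (k + 1) n,
            Nat.choose n j * 2 ^ (j - (k + 1)) * stirling j (k + 1) := by
        refine (Finset.sum_subset (Finset.Icc_subset_Icc_right (by omega)) ?_).symm
        intro x hx hx'
        rw [Finset.mem_Icc] at hx
        rw [Finset.mem_Icc] at hx'
        have : n < x := by omega
        rw [Nat.choose_eq_zero_of_lt this, zero_mul, zero_mul]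
      -- first piece: reindex
      have h3 : ∑ j ∈ Finset.Icc (k + 1) (n + 1),
            Nat.choose n (j - 1) * 2 ^ (j - (k + 1)) * stirling j (k + 1)
          = ∑ i ∈ Finset.Icc k n, (Nat.choose n i * 2 ^ (i - k) * stirling i k
            + (k + 1) * (Nat.choose n i * 2 ^ (i - k) * stirling i (k + 1))) := by
        have hmap : Finset.Icc (k + 1) (n + 1)
            = Finset.map (addRightEmbedding 1) (Finset.Icc k n) := by
          rw [Finset.map_add_right_Icc]
        rw [hmap, Finset.sum_map]
        refine Finset.sum_congr rfl fun i hi => ?_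
        simp only [addRightEmbedding_apply, Nat.add_sub_cancel, Nat.succ_sub_succ,
          Nat.sub_zero]
        rw [stirling_succ]
        ring
      rw [h2, h3, Finset.sum_add_distrib, ← Finset.mul_sum]
      -- relate the two sums over different ranges
      have h5 : ∑ i ∈ Finset.Icc k n,
            Nat.choose n i * 2 ^ (i - k) * stirling i (k + 1)
          = 2 * ∑ j ∈ Finset.Icc (k + 1) n,
            Nat.choose n j * 2 ^ (j - (k + 1)) * stirling j (k + 1) := by
        have hsub : ∑ i ∈ Finset.Icc (k + 1) n,
              Nat.choose n i * 2 ^ (i - k) * stirling i (k + 1)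
            = ∑ i ∈ Finset.Icc k n,
              Nat.choose n i * 2 ^ (i - k) * stirling i (k + 1) := by
          refine Finset.sum_subset (Finset.Icc_subset_Icc_left (Nat.le_succ k)) ?_
          intro x hx hx'
          rw [Finset.mem_Icc] at hx
          rw [Finset.mem_Icc] at hx'
          have hxk : x = k := by omega
          have hzero : stirling x (k + 1) = 0 := by
            rw [hxk]; exact stirling_of_lt (Nat.lt_succ_self k)
          rw [hzero, mul_zero]
        rw [← hsub, Finset.mul_sum]
        refine Finset.sum_congr rfl fun i hi => ?_
        rw [Finset.mem_Icc] at hi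
        have h6 : i - k = (i - (k + 1)) + 1 := by omega
        rw [h6, pow_succ]
        ring
      rw [h5]
      ring
end

section
/- For every odd natural number m and natural number n, the set of functions f: [n] → [m] is in bijection with the set of pairs (P, c), where P is a signed partition of [±n] with some number k of pairs of nonzero blocks satisfying 2k < m, and c is a choice sequence in Π_{j=1}^{k} (m - (2j-1)) options; consequently m^n = Σ_{k} S_B(n,k)·(m-1)(m-3)⋯(m-2k+1). -/
open Finset

/-- The number of pairs of nonzero blocks of a partition of `[±n]`. -/
def pairsCount (n : ℕ) (P : Finpartition (pmSet n)) : ℕ :=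
  (P.parts.filter (fun C => negSet C ≠ C)).card / 2

namespace BG

/-! ### encoding of `Fin m`, `m = 2t+1`, as signed labels -/

def sv (a : ℕ) : ℤ := if a % 2 = 1 then ((a+1)/2 : ℕ) else -((a/2 : ℕ) : ℤ)

def unsv (z : ℤ) : ℕ := if 0 < z then 2 * z.toNat - 1 else 2 * (-z).toNat

lemma unsv_sv (a : ℕ) : unsv (sv a) = a := by
  rcases Nat.even_or_odd a with ⟨b, rfl⟩ | ⟨b, rfl⟩
  · have h1 : sv (b+b) = -(b:ℤ) := by
      simp only [sv]
      rw [if_neg (by omega)]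
      have h : (b+b)/2 = b := by omega
      rw [h]
    rw [h1]
    simp only [unsv]
    rw [if_neg (by omega), neg_neg, Int.toNat_natCast]
    omega
  · have h1 : sv (2*b+1) = (b:ℤ)+1 := by
      simp only [sv]
      rw [if_pos (by omega)]
      have h : (2*b+1+1)/2 = b+1 := by omega
      rw [h]; push_cast; ring
    rw [h1]
    simp only [unsv]
    rw [if_pos (by omega)]
    have h : ((b:ℤ)+1).toNat = b + 1 := by omega
    rw [h]; omega

lemma sv_unsv (z : ℤ) : sv (unsv z) = z := by
  rcases lt_or_ge 0 z with hz | hz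
  · have h0 : unsv z = 2 * (z.toNat - 1) + 1 := by simp only [unsv, if_pos hz]; omega
    rw [h0]
    simp only [sv]
    rw [if_pos (by omega)]
    have h : (2 * (z.toNat - 1) + 1 + 1) / 2 = z.toNat := by omega
    rw [h]; omega
  · have h0 : unsv z = 2 * (-z).toNat := by simp only [unsv]; rw [if_neg (by omega)]
    rw [h0]
    simp only [sv]
    rw [if_neg (by omega)]
    have h : 2 * (-z).toNat / 2 = (-z).toNat := by omega
    rw [h]; omega

lemma sv_injective : Function.Injective sv :=
  Function.LeftInverse.injective unsv_sv

lemma sv_eq_zero_iff {a : ℕ} : sv a = 0 ↔ a = 0 := by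
  constructor
  · intro h; have := unsv_sv a; rw [h] at this; simpa [unsv] using this.symm
  · rintro rfl; simp [sv]

lemma abs_sv_le {t a : ℕ} (ha : a < 2 * t + 1) : |sv a| ≤ (t : ℤ) := by
  simp only [sv]
  split <;> rw [abs_le] <;> constructor <;> push_cast <;> omega

lemma unsv_lt {t : ℕ} {z : ℤ} (hz : |z| ≤ (t : ℤ)) : unsv z < 2 * t + 1 := by
  simp only [unsv]
  rw [abs_le] at hz
  split <;> omega

/-! ### pmSet and negSet basics -/

lemma mem_pmSet {n : ℕ} {x : ℤ} : x ∈ pmSet n ↔ x ≠ 0 ∧ -(n:ℤ) ≤ x ∧ x ≤ n := by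
  simp [pmSet, and_assoc]

lemma neg_mem_pmSet {n : ℕ} {x : ℤ} : -x ∈ pmSet n ↔ x ∈ pmSet n := by
  simp only [mem_pmSet]; omega

lemma mem_negSet {C : Finset ℤ} {y : ℤ} : y ∈ negSet C ↔ -y ∈ C := by
  simp only [negSet, Finset.mem_image]
  constructor
  · rintro ⟨x, hx, rfl⟩; simpa
  · intro h; exact ⟨-y, h, by ring⟩

lemma negSet_negSet (C : Finset ℤ) : negSet (negSet C) = C := by
  ext y; simp [mem_negSet]

lemma negSet_injective : Function.Injective negSet :=
  Function.LeftInverse.injective negSet_negSet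

/-! ### minAbs -/

def minAbs (C : Finset ℤ) : ℤ := WithTop.untopD 0 ((C.image (fun x => |x|)).min)

lemma exists_minAbs {C : Finset ℤ} (hC : C.Nonempty) : ∃ x ∈ C, |x| = minAbs C := by
  have h : (C.image (fun x => |x|)).Nonempty := hC.image _
  have hm : minAbs C ∈ C.image (fun x => |x|) := by
    rw [minAbs, ← Finset.coe_min' h, WithTop.untopD_coe]
    exact Finset.min'_mem _ _
  simpa using hm

lemma minAbs_le {C : Finset ℤ} {x : ℤ} (hx : x ∈ C) : minAbs C ≤ |x| := by
  have h : (C.image (fun y => |y|)).Nonempty := ⟨|x|, Finset.mem_image_of_mem _ hx⟩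
  rw [minAbs, ← Finset.coe_min' h, WithTop.untopD_coe]
  exact Finset.min'_le _ _ (Finset.mem_image_of_mem _ hx)

lemma minAbs_negSet (C : Finset ℤ) : minAbs (negSet C) = minAbs C := by
  unfold minAbs negSet
  rw [Finset.image_image]
  congr 2
  ext x
  simp [abs_neg]

/-! ### generic signed partition lemmas -/

variable {n : ℕ}

def NZ (P : Finpartition (pmSet n)) : Finset (Finset ℤ) :=
  P.parts.filter (fun C => negSet C ≠ C)

def RS (P : Finpartition (pmSet n)) : Finset (Finset ℤ) :=
  (NZ P).filter (fun C => minAbs C ∈ C)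

lemma negSet_mem_NZ {P : Finpartition (pmSet n)} (hP : IsSignedPartition n P)
    {C : Finset ℤ} (hC : C ∈ NZ P) : negSet C ∈ NZ P := by
  simp only [NZ, Finset.mem_filter] at hC ⊢
  exact ⟨hP.1 C hC.1, by rw [negSet_negSet]; exact fun h => hC.2 h.symm⟩

lemma canonical_or {P : Finpartition (pmSet n)} {C : Finset ℤ}
    (hC : C ∈ P.parts) : minAbs C ∈ C ∨ minAbs C ∈ negSet C := by
  obtain ⟨x, hx, habs⟩ := exists_minAbs (P.nonempty_of_mem_parts hC)
  rcases abs_cases x with ⟨h1, _⟩ | ⟨h1, _⟩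
  · left; rw [← habs, h1]; exact hx
  · right; rw [mem_negSet, ← habs, h1, neg_neg]; exact hx

lemma not_canonical_both {P : Finpartition (pmSet n)} {C : Finset ℤ}
    (hC : C ∈ NZ P) (hP : IsSignedPartition n P) :
    ¬ (minAbs C ∈ C ∧ minAbs C ∈ negSet C) := by
  rintro ⟨h1, h2⟩
  simp only [NZ, Finset.mem_filter] at hC
  have hneg : negSet C ∈ P.parts := hP.1 C hC.1
  exact hC.2 (P.eq_of_mem_parts hneg hC.1 h2 h1)

lemma card_NZ_eq_two_mul {P : Finpartition (pmSet n)} (hP : IsSignedPartition n P) :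
    (NZ P).card = 2 * (RS P).card := by
  have hsub : RS P ⊆ NZ P := Finset.filter_subset _ _
  have hcard : ((NZ P) \ (RS P)).card = (RS P).card := by
    apply (Finset.card_bij (fun C _ => negSet C) ?_ ?_ ?_).symm
    · intro C hC
      simp only [RS, Finset.mem_filter] at hC
      rw [Finset.mem_sdiff]
      refine ⟨negSet_mem_NZ hP hC.1, ?_⟩
      simp only [RS, Finset.mem_filter]
      rintro ⟨h1, h2⟩
      rw [minAbs_negSet] at h2
      exact not_canonical_both hC.1 hP ⟨hC.2, h2⟩
    · intro C _ D _ h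
      exact negSet_injective h
    · intro D hD
      rw [Finset.mem_sdiff] at hD
      refine ⟨negSet D, ?_, negSet_negSet D⟩
      simp only [RS, Finset.mem_filter]
      refine ⟨negSet_mem_NZ hP hD.1, ?_⟩
      rw [minAbs_negSet]
      have := canonical_or (P := P) (C := D) ?_
      · rcases this with h | h
        · exfalso
          apply hD.2
          simp only [RS, Finset.mem_filter]
          exact ⟨hD.1, h⟩
        · exact h
      · exact (Finset.mem_filter.mp hD.1).1
  have := Finset.card_sdiff_of_subset hsub
  omega

lemma pairsCount_eq_card_RS {P : Finpartition (pmSet n)} (hP : IsSignedPartition n P) :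
    pairsCount n P = (RS P).card := by
  have := card_NZ_eq_two_mul hP
  simp only [pairsCount]
  rw [show P.parts.filter (fun C => negSet C ≠ C) = NZ P from rfl, this]
  omega

lemma part_neg {P : Finpartition (pmSet n)} (hP : IsSignedPartition n P)
    {x : ℤ} (hx : x ∈ pmSet n) : P.part (-x) = negSet (P.part x) := by
  apply P.part_eq_of_mem
  · exact hP.1 _ (P.part_mem.mpr hx)
  · rw [mem_negSet, neg_neg]; exact P.mem_part hx

lemma mem_RS_cases {P : Finpartition (pmSet n)} (hP : IsSignedPartition n P)
    {C : Finset ℤ} (hC : C ∈ NZ P) :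
    (C ∈ RS P ∧ negSet C ∉ RS P) ∨ (C ∉ RS P ∧ negSet C ∈ RS P) := by
  have hCp : C ∈ P.parts := (Finset.mem_filter.mp hC).1
  have hnc := not_canonical_both hC hP
  have hng : negSet C ∈ NZ P := negSet_mem_NZ hP hC
  rcases canonical_or hCp with h | h
  · left
    constructor
    · simp only [RS, Finset.mem_filter]; exact ⟨hC, h⟩
    · simp only [RS, Finset.mem_filter, minAbs_negSet]
      rintro ⟨_, h2⟩; exact hnc ⟨h, h2⟩
  · right
    constructor
    · simp only [RS, Finset.mem_filter]
      rintro ⟨_, h2⟩; exact hnc ⟨h2, h⟩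
    · simp only [RS, Finset.mem_filter, minAbs_negSet]
      exact ⟨hng, h⟩

/-! ### the partition induced by a function -/

def hraw (n : ℕ) {m : ℕ} (f : Fin n → Fin m) (x : ℤ) : ℤ :=
  if hx : 0 < x ∧ x ≤ (n:ℤ) then sv (f ⟨x.toNat - 1, by omega⟩) else 0

def hfun (n : ℕ) {m : ℕ} (f : Fin n → Fin m) (x : ℤ) : ℤ :=
  if 0 < x then hraw n f x else -hraw n f (-x)

variable {m : ℕ}

lemma hfun_pos {f : Fin n → Fin m} (i : Fin n) : hfun n f ((i:ℤ)+1) = sv (f i) := by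
  have hi := i.isLt
  unfold hfun hraw
  rw [if_pos (by omega : (0:ℤ) < (i:ℤ)+1),
    dif_pos (⟨by omega, by omega⟩ : 0 < (i:ℤ)+1 ∧ (i:ℤ)+1 ≤ (n:ℤ))]
  have h : (⟨(((i:ℤ)+1).toNat - 1 : ℕ), by omega⟩ : Fin n) = i := by
    apply Fin.ext
    show (((i:ℤ)+1).toNat - 1 : ℕ) = (i : ℕ)
    omega
  rw [h]

lemma hfun_neg {f : Fin n → Fin m} (x : ℤ) : hfun n f (-x) = - hfun n f x := by
  unfold hfun
  rcases lt_trichotomy x 0 with hx | rfl | hx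
  · rw [if_pos (by omega : (0:ℤ) < -x), if_neg (by omega : ¬ (0:ℤ) < x), neg_neg]
  · have h : hraw n f (0:ℤ) = 0 := by
      unfold hraw
      rw [dif_neg (by omega)]
    simp [h]
  · rw [if_neg (by omega : ¬ (0:ℤ) < -x), if_pos hx, neg_neg]

lemma abs_sv_le' {t : ℕ} (hm : m ≤ 2*t+1) (v : Fin m) : |sv (v : ℕ)| ≤ (t:ℤ) :=
  abs_sv_le (by have := v.isLt; omega)

lemma abs_hfun_le {t : ℕ} (hm : m ≤ 2*t+1) {f : Fin n → Fin m} (x : ℤ) :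
    |hfun n f x| ≤ (t:ℤ) := by
  unfold hfun hraw
  split_ifs <;> (try simp only [abs_neg, abs_zero]) <;>
    first
      | exact abs_sv_le' hm _
      | exact_mod_cast Nat.zero_le t

noncomputable def blk (n : ℕ) {m : ℕ} (f : Fin n → Fin m) (x : ℤ) : Finset ℤ :=
  (pmSet n).filter (fun y => hfun n f y = hfun n f x)

lemma mem_blk {f : Fin n → Fin m} {x y : ℤ} :
    y ∈ blk n f x ↔ y ∈ pmSet n ∧ hfun n f y = hfun n f x := Finset.mem_filter

lemma blk_eq_of_val_eq {f : Fin n → Fin m} {x y : ℤ} (h : hfun n f y = hfun n f x) :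
    blk n f y = blk n f x := by
  unfold blk
  apply Finset.filter_congr
  intro z _
  rw [h]

lemma negSet_blk {f : Fin n → Fin m} (x : ℤ) : negSet (blk n f x) = blk n f (-x) := by
  ext y
  rw [mem_negSet, mem_blk, mem_blk, neg_mem_pmSet]
  constructor
  · rintro ⟨h1, h2⟩
    refine ⟨h1, ?_⟩
    rw [hfun_neg] at h2 ⊢
    omega
  · rintro ⟨h1, h2⟩
    refine ⟨h1, ?_⟩
    rw [hfun_neg, h2, hfun_neg, neg_neg]

noncomputable def phiPart (n : ℕ) {m : ℕ} (f : Fin n → Fin m) : Finpartition (pmSet n) where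
  parts := (pmSet n).image (blk n f)
  supIndep := by
    rw [Finset.supIndep_iff_pairwiseDisjoint]
    intro C hC D hD hne
    simp only [Finset.coe_image, Set.mem_image, Finset.mem_coe] at hC hD
    obtain ⟨x, hx, rfl⟩ := hC
    obtain ⟨y, hy, rfl⟩ := hD
    rw [Function.onFun, id, id, Finset.disjoint_left]
    intro z hz1 hz2
    rw [mem_blk] at hz1 hz2
    exact hne (blk_eq_of_val_eq (hz1.2.symm.trans hz2.2) ▸ rfl)
  sup_parts := by
    apply Finset.Subset.antisymm
    · intro z hz
      rw [Finset.mem_sup] at hz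
      obtain ⟨C, hC, hzC⟩ := hz
      simp only [Finset.mem_image] at hC
      obtain ⟨x, hx, rfl⟩ := hC
      exact Finset.filter_subset _ _ hzC
    · intro x hx
      rw [Finset.mem_sup]
      exact ⟨blk n f x, Finset.mem_image_of_mem _ hx, mem_blk.mpr ⟨hx, rfl⟩⟩
  bot_notMem := by
    simp only [Finset.bot_eq_empty, Finset.mem_image]
    rintro ⟨x, hx, hempty⟩
    have : x ∈ blk n f x := mem_blk.mpr ⟨hx, rfl⟩
    rw [hempty] at this
    exact absurd this (Finset.notMem_empty x)

lemma mem_parts_phi {f : Fin n → Fin m} {C : Finset ℤ} :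
    C ∈ (phiPart n f).parts ↔ ∃ x ∈ pmSet n, blk n f x = C := by
  simp [phiPart]

lemma blk_of_mem {f : Fin n → Fin m} {C : Finset ℤ} (hC : C ∈ (phiPart n f).parts)
    {y : ℤ} (hy : y ∈ C) : C = blk n f y := by
  obtain ⟨x, hx, rfl⟩ := mem_parts_phi.mp hC
  rw [mem_blk] at hy
  exact (blk_eq_of_val_eq hy.2).symm

lemma hfun_eq_zero_of_selfneg {f : Fin n → Fin m} {C : Finset ℤ}
    (hC : C ∈ (phiPart n f).parts) (hneg : negSet C = C) {y : ℤ} (hy : y ∈ C) :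
    hfun n f y = 0 := by
  have hCy := blk_of_mem hC hy
  have h1 : -y ∈ C := by
    rw [← hneg, mem_negSet, neg_neg]; exact hy
  rw [hCy, mem_blk, hfun_neg] at h1
  omega

lemma hfun_ne_zero_of_NZ {f : Fin n → Fin m} {C : Finset ℤ}
    (hC : C ∈ NZ (phiPart n f)) {y : ℤ} (hy : y ∈ C) : hfun n f y ≠ 0 := by
  rw [NZ, Finset.mem_filter] at hC
  intro h0
  apply hC.2
  have hCy := blk_of_mem hC.1 hy
  rw [hCy, negSet_blk]
  apply blk_eq_of_val_eq
  rw [hfun_neg, h0, neg_zero]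

lemma phi_signed (f : Fin n → Fin m) : IsSignedPartition n (phiPart n f) := by
  constructor
  · intro C hC
    obtain ⟨x, hx, rfl⟩ := mem_parts_phi.mp hC
    rw [negSet_blk]
    exact mem_parts_phi.mpr ⟨-x, neg_mem_pmSet.mpr hx, rfl⟩
  · rw [Finset.card_le_one]
    intro C hC D hD
    rw [Finset.mem_filter] at hC hD
    obtain ⟨x, hx, rfl⟩ := mem_parts_phi.mp hC.1
    obtain ⟨y, hy, rfl⟩ := mem_parts_phi.mp hD.1
    have h1 : hfun n f x = 0 :=
      hfun_eq_zero_of_selfneg hC.1 hC.2 (mem_blk.mpr ⟨hx, rfl⟩)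
    have h2 : hfun n f y = 0 :=
      hfun_eq_zero_of_selfneg hD.1 hD.2 (mem_blk.mpr ⟨hy, rfl⟩)
    apply blk_eq_of_val_eq
    rw [h1, h2]

/-! ### forward data: labels and signs from a function -/

variable {t : ℕ}

lemma fwd_facts (hm : m = 2*t+1) {f : Fin n → Fin m} {C : Finset ℤ}
    (hC : C ∈ RS (phiPart n f)) :
    hfun n f (minAbs C) ≠ 0 ∧ |hfun n f (minAbs C)| ≤ (t:ℤ) ∧ C = blk n f (minAbs C) := by
  rw [RS, Finset.mem_filter] at hC
  obtain ⟨hNZ, hmin⟩ := hC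
  have hparts : C ∈ (phiPart n f).parts := (Finset.mem_filter.mp hNZ).1
  exact ⟨hfun_ne_zero_of_NZ hNZ hmin, abs_hfun_le (by omega) _, blk_of_mem hparts hmin⟩

lemma fwd_inj (hm : m = 2*t+1) {f : Fin n → Fin m} {C C' : Finset ℤ}
    (hC : C ∈ RS (phiPart n f)) (hC' : C' ∈ RS (phiPart n f))
    (h : |hfun n f (minAbs C)| = |hfun n f (minAbs C')|) : C = C' := by
  obtain ⟨h1, _, h3⟩ := fwd_facts hm hC
  obtain ⟨h1', _, h3'⟩ := fwd_facts hm hC'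
  rcases abs_eq_abs.mp h with he | he
  · rw [h3, h3']
    exact blk_eq_of_val_eq he
  · exfalso
    have hCn : C = negSet C' := by
      rw [h3, h3', negSet_blk]
      apply blk_eq_of_val_eq
      rw [hfun_neg, he]
    have hNZ' : C' ∈ NZ (phiPart n f) := (Finset.mem_filter.mp hC').1
    rcases mem_RS_cases (phi_signed f) hNZ' with ⟨_, h5⟩ | ⟨h4, _⟩
    · exact h5 (hCn ▸ hC)
    · exact h4 hC'

/-- number of pairs bound -/
lemma card_RS_le (hm : m = 2*t+1) (f : Fin n → Fin m) :
    (RS (phiPart n f)).card ≤ t := by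
  have h1 : (RS (phiPart n f)).card ≤ (Finset.Icc (1:ℤ) (t:ℤ)).card := by
    apply Finset.card_le_card_of_injOn (fun C => |hfun n f (minAbs C)|)
    · intro C hC
      obtain ⟨hz, hle, _⟩ := fwd_facts hm hC
      have := abs_pos.mpr hz
      simp only [Finset.mem_coe, Finset.mem_Icc]
      omega
    · intro C hC C' hC' h
      exact fwd_inj hm hC hC' h
  rw [Int.card_Icc] at h1
  omega

/-! ### backward data: building a function from a partition plus choices -/

def bval (P : Finpartition (pmSet n)) (ψ : {D // D ∈ RS P} ↪ Fin t)
    (σ : {D // D ∈ RS P} → Bool) (D : Finset ℤ) : ℤ :=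
  if hD : D ∈ RS P then
    (if σ ⟨D, hD⟩ then 1 else -1) * (((ψ ⟨D, hD⟩ : ℕ) : ℤ) + 1) else 0

def blkSVal (P : Finpartition (pmSet n)) (ψ : {D // D ∈ RS P} ↪ Fin t)
    (σ : {D // D ∈ RS P} → Bool) (C : Finset ℤ) : ℤ :=
  if negSet C = C then 0
  else if minAbs C ∈ C then bval P ψ σ C else - bval P ψ σ (negSet C)

variable {P : Finpartition (pmSet n)} {ψ : {D // D ∈ RS P} ↪ Fin t}
  {σ : {D // D ∈ RS P} → Bool}

lemma abs_bval {D : Finset ℤ} (hD : D ∈ RS P) :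
    |bval P ψ σ D| = ((ψ ⟨D, hD⟩ : ℕ) : ℤ) + 1 := by
  rw [bval, dif_pos hD]
  split
  · rw [one_mul]
    exact abs_of_nonneg (by positivity)
  · rw [neg_one_mul, abs_neg]
    exact abs_of_nonneg (by positivity)

lemma blkSVal_selfneg {C : Finset ℤ} (hs : negSet C = C) : blkSVal P ψ σ C = 0 := by
  rw [blkSVal, if_pos hs]

lemma blkSVal_NZ (hP : IsSignedPartition n P) {C : Finset ℤ} (hC : C ∈ NZ P) :
    ∃ D : {D // D ∈ RS P}, (C = ↑D ∨ C = negSet ↑D) ∧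
      |blkSVal P ψ σ C| = ((ψ D : ℕ) : ℤ) + 1 := by
  have hs : negSet C ≠ C := (Finset.mem_filter.mp hC).2
  rw [blkSVal, if_neg hs]
  by_cases hc : minAbs C ∈ C
  · have hR : C ∈ RS P := Finset.mem_filter.mpr ⟨hC, hc⟩
    exact ⟨⟨C, hR⟩, Or.inl rfl, by rw [if_pos hc]; exact abs_bval hR⟩
  · rcases mem_RS_cases hP hC with ⟨h1, _⟩ | ⟨_, h2⟩
    · exact absurd (Finset.mem_filter.mp h1).2 hc
    · refine ⟨⟨negSet C, h2⟩, Or.inr (negSet_negSet C).symm, ?_⟩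
      rw [if_neg hc, abs_neg]
      exact abs_bval h2

lemma abs_blkSVal_le (hP : IsSignedPartition n P) {C : Finset ℤ} (hC : C ∈ P.parts) :
    |blkSVal P ψ σ C| ≤ (t:ℤ) := by
  by_cases hs : negSet C = C
  · rw [blkSVal_selfneg hs]
    simp
  · obtain ⟨D, _, habs⟩ := blkSVal_NZ hP (Finset.mem_filter.mpr ⟨hC, hs⟩) (ψ := ψ) (σ := σ)
    have := (ψ D).isLt
    omega

lemma blkSVal_ne_zero (hP : IsSignedPartition n P) {C : Finset ℤ} (hC : C ∈ NZ P) :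
    blkSVal P ψ σ C ≠ 0 := by
  obtain ⟨D, _, habs⟩ := blkSVal_NZ hP hC (ψ := ψ) (σ := σ)
  intro h0
  rw [h0] at habs
  simp at habs
  omega

lemma blkSVal_negSet (hP : IsSignedPartition n P) {C : Finset ℤ} (hC : C ∈ P.parts) :
    blkSVal P ψ σ (negSet C) = - blkSVal P ψ σ C := by
  by_cases hs : negSet C = C
  · rw [hs, blkSVal_selfneg hs]
    simp
  · have hC' : C ∈ NZ P := Finset.mem_filter.mpr ⟨hC, hs⟩
    have hnn : negSet (negSet C) = C := negSet_negSet C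
    have hs2 : negSet (negSet C) ≠ negSet C := by
      rw [hnn]
      exact fun h => hs h.symm
    rw [blkSVal, blkSVal, if_neg hs2, if_neg hs, minAbs_negSet]
    by_cases hc : minAbs C ∈ C
    · have hnc : minAbs C ∉ negSet C := by
        intro h
        exact not_canonical_both hC' hP ⟨hc, h⟩
      rw [if_neg hnc, if_pos hc, hnn]
    · have hnc : minAbs C ∈ negSet C := (canonical_or hC).resolve_left hc
      rw [if_pos hnc, if_neg hc, neg_neg]

lemma blkSVal_inj (hP : IsSignedPartition n P) {C C' : Finset ℤ}
    (hC : C ∈ P.parts) (hC' : C' ∈ P.parts)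
    (h : blkSVal P ψ σ C = blkSVal P ψ σ C') : C = C' := by
  by_cases hs : negSet C = C
  · by_cases hs' : negSet C' = C'
    · have hcard := hP.2
      rw [Finset.card_le_one] at hcard
      exact hcard C (Finset.mem_filter.mpr ⟨hC, hs⟩) C' (Finset.mem_filter.mpr ⟨hC', hs'⟩)
    · exfalso
      apply blkSVal_ne_zero hP (Finset.mem_filter.mpr ⟨hC', hs'⟩) (ψ := ψ) (σ := σ)
      rw [← h, blkSVal_selfneg hs]
  · by_cases hs' : negSet C' = C'
    · exfalso
      apply blkSVal_ne_zero hP (Finset.mem_filter.mpr ⟨hC, hs⟩) (ψ := ψ) (σ := σ)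
      rw [h, blkSVal_selfneg hs']
    · have hNZ : C ∈ NZ P := Finset.mem_filter.mpr ⟨hC, hs⟩
      have hNZ' : C' ∈ NZ P := Finset.mem_filter.mpr ⟨hC', hs'⟩
      obtain ⟨D, hD, habs⟩ := blkSVal_NZ hP hNZ (ψ := ψ) (σ := σ)
      obtain ⟨D', hD', habs'⟩ := blkSVal_NZ hP hNZ' (ψ := ψ) (σ := σ)
      have hψ : ψ D = ψ D' := by
        apply Fin.ext
        rw [h] at habs
        omega
      have hDD : D = D' := ψ.injective hψ
      subst hDD
      have hne : blkSVal P ψ σ C ≠ 0 := blkSVal_ne_zero hP hNZ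
      rcases hD with rfl | rfl <;> rcases hD' with h2 | h2
      · exact h2.symm
      · exfalso
        have hDp : (D : Finset ℤ) ∈ P.parts :=
          (Finset.mem_filter.mp (Finset.mem_filter.mp D.2).1).1
        rw [h2, blkSVal_negSet hP hDp] at h
        omega
      · exfalso
        subst h2
        have hDp : (D : Finset ℤ) ∈ P.parts :=
          (Finset.mem_filter.mp (Finset.mem_filter.mp D.2).1).1
        rw [blkSVal_negSet hP hDp] at h
        have hDne : blkSVal P ψ σ (D : Finset ℤ) ≠ 0 :=
          blkSVal_ne_zero hP (Finset.mem_filter.mp D.2).1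
        omega
      · rw [h2]

/-! ### the inverse function -/

lemma mem_pmSet_succ (i : Fin n) : ((i:ℤ)+1) ∈ pmSet n := by
  have := i.isLt
  rw [mem_pmSet]
  refine ⟨by omega, by omega, by omega⟩

noncomputable def fInv (hm : m = 2*t+1) (P : Finpartition (pmSet n)) (hP : IsSignedPartition n P)
    (ψ : {D // D ∈ RS P} ↪ Fin t) (σ : {D // D ∈ RS P} → Bool) : Fin n → Fin m :=
  fun i => ⟨unsv (blkSVal P ψ σ (P.part ((i:ℤ)+1))), by
    have h1 := abs_blkSVal_le (ψ := ψ) (σ := σ) hP (P.part_mem.mpr (mem_pmSet_succ i))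
    have := unsv_lt h1
    omega⟩

lemma hfun_fInv (hm : m = 2*t+1) (hP : IsSignedPartition n P)
    {x : ℤ} (hx : x ∈ pmSet n) :
    hfun n (fInv hm P hP ψ σ) x = blkSVal P ψ σ (P.part x) := by
  have key : ∀ y, y ∈ pmSet n → 0 < y →
      hfun n (fInv hm P hP ψ σ) y = blkSVal P ψ σ (P.part y) := by
    intro y hy hy0
    rw [mem_pmSet] at hy
    have hn : 0 < n := by omega
    set i : Fin n := ⟨y.toNat - 1, by omega⟩ with hidef
    have hiy : ((i:ℤ)+1) = y := by
      simp only [hidef]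
      omega
    rw [← hiy, hfun_pos i]
    show sv ((fInv hm P hP ψ σ i : Fin m) : ℕ) = _
    rw [fInv]
    show sv (unsv (blkSVal P ψ σ (P.part ((i:ℤ)+1)))) = _
    rw [sv_unsv]
  rcases lt_trichotomy x 0 with h | h | h
  · have hx' : -x ∈ pmSet n := neg_mem_pmSet.mpr hx
    have h2 := key (-x) hx' (by omega)
    have h3 : hfun n (fInv hm P hP ψ σ) (-x) = - hfun n (fInv hm P hP ψ σ) x := hfun_neg x
    rw [part_neg hP hx, blkSVal_negSet hP (P.part_mem.mpr hx)] at h2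
    omega
  · rw [mem_pmSet] at hx
    omega
  · exact key x hx h

lemma blk_fInv (hm : m = 2*t+1) (hP : IsSignedPartition n P)
    {x : ℤ} (hx : x ∈ pmSet n) :
    blk n (fInv hm P hP ψ σ) x = P.part x := by
  ext y
  rw [mem_blk]
  constructor
  · rintro ⟨hy, hval⟩
    rw [hfun_fInv hm hP hy, hfun_fInv hm hP hx] at hval
    have := blkSVal_inj hP (P.part_mem.mpr hy) (P.part_mem.mpr hx) hval
    rw [← this]
    exact P.mem_part hy
  · intro hy
    have hy' : y ∈ pmSet n := P.le (P.part_mem.mpr hx) hy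
    have hpp : P.part y = P.part x := (P.part_eq_of_mem (P.part_mem.mpr hx) hy)
    refine ⟨hy', ?_⟩
    rw [hfun_fInv hm hP hy', hfun_fInv hm hP hx, hpp]

lemma parts_fInv (hm : m = 2*t+1) (hP : IsSignedPartition n P) :
    phiPart n (fInv hm P hP ψ σ) = P := by
  apply Finpartition.ext
  apply Finset.Subset.antisymm
  · intro C hC
    obtain ⟨x, hx, rfl⟩ := mem_parts_phi.mp hC
    rw [blk_fInv hm hP hx]
    exact P.part_mem.mpr hx
  · intro C hC
    obtain ⟨x, hx⟩ := P.nonempty_of_mem_parts hC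
    have hx' : x ∈ pmSet n := P.le hC hx
    have : P.part x = C := P.part_eq_of_mem hC hx
    rw [← this, ← blk_fInv hm hP hx' (ψ := ψ) (σ := σ)]
    exact mem_parts_phi.mpr ⟨x, hx', rfl⟩

/-! ### the forward maps -/

def fwdEmb (hm : m = 2*t+1) (P : Finpartition (pmSet n)) (f : Fin n → Fin m)
    (hf : phiPart n f = P) : {D // D ∈ RS P} ↪ Fin t where
  toFun := fun C => ⟨(|hfun n f (minAbs C.1)| - 1).toNat, by
    have hC : C.1 ∈ RS (phiPart n f) := by rw [hf]; exact C.2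
    obtain ⟨hz, hle, _⟩ := fwd_facts hm hC
    have := abs_pos.mpr hz
    omega⟩
  inj' := by
    intro C C' h
    have hC : C.1 ∈ RS (phiPart n f) := by rw [hf]; exact C.2
    have hC' : C'.1 ∈ RS (phiPart n f) := by rw [hf]; exact C'.2
    obtain ⟨hz, hle, _⟩ := fwd_facts hm hC
    obtain ⟨hz', hle', _⟩ := fwd_facts hm hC'
    have g1 := abs_pos.mpr hz
    have g1' := abs_pos.mpr hz'
    have hval := congrArg Fin.val h
    simp only at hval
    apply Subtype.ext
    exact fwd_inj hm hC hC' (by omega)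

def fwdSgn (P : Finpartition (pmSet n)) (f : Fin n → Fin m) :
    {D // D ∈ RS P} → Bool :=
  fun C => decide (0 < hfun n f (minAbs C.1))

lemma bval_fwd (hm : m = 2*t+1) {f : Fin n → Fin m} (hf : phiPart n f = P)
    {D : Finset ℤ} (hD : D ∈ RS P) :
    bval P (fwdEmb hm P f hf) (fwdSgn P f) D = hfun n f (minAbs D) := by
  have hD' : D ∈ RS (phiPart n f) := by rw [hf]; exact hD
  obtain ⟨hz, hle, _⟩ := fwd_facts hm hD'
  have g1 := abs_pos.mpr hz
  rw [bval, dif_pos hD]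
  show (if decide (0 < hfun n f (minAbs D)) then (1:ℤ) else -1) *
    (((|hfun n f (minAbs D)| - 1).toNat : ℤ) + 1) = _
  have hcast : ((|hfun n f (minAbs D)| - 1).toNat : ℤ) + 1 = |hfun n f (minAbs D)| := by
    omega
  rw [hcast]
  rcases lt_trichotomy 0 (hfun n f (minAbs D)) with hpos | hzero | hneg
  · rw [if_pos (by simpa using hpos), one_mul, abs_of_pos hpos]
  · omega
  · rw [if_neg (by simp; omega), neg_one_mul, abs_of_neg hneg, neg_neg]

lemma recover_val (hm : m = 2*t+1) (hP : IsSignedPartition n P)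
    {f : Fin n → Fin m} (hf : phiPart n f = P) {x : ℤ} (hx : x ∈ pmSet n) :
    blkSVal P (fwdEmb hm P f hf) (fwdSgn P f) (P.part x) = hfun n f x := by
  set C := P.part x with hCdef
  have hC : C ∈ P.parts := P.part_mem.mpr hx
  have hxC : x ∈ C := P.mem_part hx
  have hCphi : C ∈ (phiPart n f).parts := by rw [hf]; exact hC
  have hCblk : C = blk n f x := blk_of_mem hCphi hxC
  by_cases hs : negSet C = C
  · rw [blkSVal_selfneg hs]
    exact (hfun_eq_zero_of_selfneg hCphi hs hxC).symm
  · have hNZ : C ∈ NZ P := Finset.mem_filter.mpr ⟨hC, hs⟩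
    rw [blkSVal, if_neg hs]
    by_cases hc : minAbs C ∈ C
    · have hR : C ∈ RS P := Finset.mem_filter.mpr ⟨hNZ, hc⟩
      rw [if_pos hc, bval_fwd hm hf hR]
      have : minAbs C ∈ blk n f x := by rw [← hCblk]; exact hc
      exact (mem_blk.mp this).2
    · rcases mem_RS_cases hP hNZ with ⟨h1, _⟩ | ⟨_, h2⟩
      · exact absurd (Finset.mem_filter.mp h1).2 hc
      · rw [if_neg hc, bval_fwd hm hf h2]
        have hng : negSet C = blk n f (-x) := by rw [hCblk, negSet_blk]
        have hminneg : minAbs (negSet C) ∈ negSet C := by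
          rw [minAbs_negSet]
          exact (canonical_or hC).resolve_left hc
        have hmem : minAbs (negSet C) ∈ blk n f (-x) := by rw [← hng]; exact hminneg
        have hval : hfun n f (minAbs (negSet C)) = hfun n f (-x) := (mem_blk.mp hmem).2
        rw [hval, hfun_neg, neg_neg]

/-! ### the fiber equivalence -/

noncomputable def fiberEquiv (hm : m = 2*t+1) (P : Finpartition (pmSet n)) (hP : IsSignedPartition n P) :
    {f : Fin n → Fin m // phiPart n f = P} ≃
      ({D // D ∈ RS P} ↪ Fin t) × ({D // D ∈ RS P} → Bool) where
  toFun fp := (fwdEmb hm P fp.1 fp.2, fwdSgn P fp.1)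
  invFun pc := ⟨fInv hm P hP pc.1 pc.2, parts_fInv hm hP⟩
  left_inv := by
    rintro ⟨f, hf⟩
    apply Subtype.ext
    show fInv hm P hP _ _ = f
    funext i
    apply Fin.ext
    show unsv (blkSVal P (fwdEmb hm P f hf) (fwdSgn P f) (P.part ((i:ℤ)+1))) = (f i : ℕ)
    rw [recover_val hm hP hf (mem_pmSet_succ i), hfun_pos i, unsv_sv]
  right_inv := by
    rintro ⟨ψ, σ⟩
    set f := fInv hm P hP ψ σ with hfdef
    have hf : phiPart n f = P := parts_fInv hm hP
    have key : ∀ C : {D // D ∈ RS P},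
        hfun n f (minAbs C.1) = (if σ C then (1:ℤ) else -1) * (((ψ C : ℕ) : ℤ) + 1) := by
      intro C
      have hCR : C.1 ∈ RS P := C.2
      have hNZ : C.1 ∈ NZ P := (Finset.mem_filter.mp hCR).1
      have hCp : C.1 ∈ P.parts := (Finset.mem_filter.mp hNZ).1
      have hmin : minAbs C.1 ∈ C.1 := (Finset.mem_filter.mp hCR).2
      have hminpm : minAbs C.1 ∈ pmSet n := P.le hCp hmin
      rw [hfun_fInv hm hP hminpm, P.part_eq_of_mem hCp hmin]
      rw [blkSVal, if_neg (Finset.mem_filter.mp hNZ).2, if_pos hmin, bval, dif_pos hCR]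
    refine Prod.ext ?_ ?_
    · apply DFunLike.ext
      intro C
      apply Fin.ext
      show (|hfun n f (minAbs C.1)| - 1).toNat = ((ψ C : ℕ))
      rw [key C]
      rcases Bool.dichotomy (σ C) with hb | hb <;> rw [hb]
      · rw [if_neg (by simp), neg_one_mul, abs_neg]
        have : (0:ℤ) ≤ ((ψ C : ℕ) : ℤ) + 1 := by positivity
        rw [abs_of_nonneg this]
        omega
      · rw [if_pos rfl, one_mul]
        have : (0:ℤ) ≤ ((ψ C : ℕ) : ℤ) + 1 := by positivity
        rw [abs_of_nonneg this]
        omega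
    · funext C
      show decide (0 < hfun n f (minAbs C.1)) = σ C
      rw [key C]
      rcases Bool.dichotomy (σ C) with hb | hb <;> rw [hb] <;> simp <;> omega

/-! ### counting -/

lemma card_pmSet (n : ℕ) : (pmSet n).card = 2*n := by
  rw [pmSet, Finset.card_erase_of_mem (by rw [Finset.mem_Icc]; omega), Int.card_Icc]
  omega

lemma finpartition_finite (n : ℕ) : Finite (Finpartition (pmSet n)) := by
  apply Finite.of_injective
    (fun P : Finpartition (pmSet n) =>
      (⟨P.parts, by
        rw [Finset.mem_powerset]
        intro C hC
        rw [Finset.mem_powerset]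
        exact P.le hC⟩ : {S // S ∈ (pmSet n).powerset.powerset}))
  intro P Q h
  exact Finpartition.ext (congrArg Subtype.val h)

lemma fiber_card (hm : m = 2*t+1) (P : Finpartition (pmSet n))
    (hP : IsSignedPartition n P) :
    Nat.card {f : Fin n → Fin m // phiPart n f = P} =
      ∏ j ∈ Finset.range ((RS P).card), (m - (2*j+1)) := by
  classical
  rw [Nat.card_congr (fiberEquiv hm P hP), Nat.card_eq_fintype_card, Fintype.card_prod,
    Fintype.card_embedding_eq, Fintype.card_fun]
  have h1 : Fintype.card {D // D ∈ RS P} = (RS P).card := Fintype.card_coe _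
  have h2 : Fintype.card Bool = 2 := rfl
  have h3 : Fintype.card (Fin t) = t := Fintype.card_fin t
  rw [h1, h2, h3]
  have h4 : ∀ j ∈ Finset.range ((RS P).card), m - (2*j+1) = 2 * (t - j) := by
    intro j _
    omega
  rw [Finset.prod_congr rfl h4, Finset.prod_mul_distrib, Finset.prod_const,
    Finset.card_range, ← Nat.descFactorial_eq_prod_range]
  ring

end BG

/-- Bagno–Garber's balls-into-urns correspondence: for odd `m`, functions
`[n] → [m]` are in bijection with pairs `(P, c)` of a signed partition `P` of
`[±n]` with `k` pairs of nonzero blocks, `2k < m`, together with a choice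
sequence with `m - (2j-1)` options for the `j`-th pair (`j = 1,…,k`);
consequently `m^n = Σ_k S_B(n,k)·(m-1)(m-3)⋯(m-2k+1)`. -/
theorem balls_into_urns_bijection (n m : ℕ) (hm : Odd m) :
    Nonempty ((Fin n → Fin m) ≃
      (Σ P : {P : Finpartition (pmSet n) //
          IsSignedPartition n P ∧ 2 * pairsCount n P < m},
        (j : Fin (pairsCount n P.1)) → Fin (m - (2 * (j : ℕ) + 1)))) ∧
    m ^ n = ∑ k ∈ Finset.range (n + 1),
      SB n k * ∏ j ∈ Finset.range k, (m - (2 * j + 1)) := by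
  classical
  open BG in
  obtain ⟨t, ht⟩ := hm
  have hm' : m = 2*t+1 := by omega
  haveI : Finite (Finpartition (pmSet n)) := finpartition_finite n
  haveI ftP : Fintype (Finpartition (pmSet n)) := Fintype.ofFinite _
  have hΦmem : ∀ f : Fin n → Fin m,
      IsSignedPartition n (phiPart n f) ∧ 2 * pairsCount n (phiPart n f) < m := by
    intro f
    refine ⟨phi_signed f, ?_⟩
    rw [pairsCount_eq_card_RS (phi_signed f)]
    have := card_RS_le hm' f
    omega
  set Φ : (Fin n → Fin m) →
      {P : Finpartition (pmSet n) // IsSignedPartition n P ∧ 2 * pairsCount n P < m} :=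
    fun f => ⟨phiPart n f, hΦmem f⟩ with hΦdef
  have hfib : ∀ P : {P : Finpartition (pmSet n) //
      IsSignedPartition n P ∧ 2 * pairsCount n P < m},
      (Finset.univ.filter (fun f : Fin n → Fin m => Φ f = P)).card
        = ∏ j ∈ Finset.range (pairsCount n P.1), (m - (2*j+1)) := by
    intro P
    have hPC : pairsCount n P.1 = (RS P.1).card := pairsCount_eq_card_RS P.2.1
    have h1 : (Finset.univ.filter (fun f : Fin n → Fin m => Φ f = P)).card
        = Nat.card {f : Fin n → Fin m // phiPart n f = P.1} := by
      rw [Nat.card_eq_fintype_card, Fintype.card_subtype]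
      congr 1
      apply Finset.filter_congr
      intro f _
      rw [hΦdef]
      simp only [eq_iff_iff]
      exact Subtype.ext_iff
    rw [h1, fiber_card hm' P.1 P.2.1, hPC]
  have key : m ^ n = ∑ P : {P : Finpartition (pmSet n) //
      IsSignedPartition n P ∧ 2 * pairsCount n P < m},
      ∏ j ∈ Finset.range (pairsCount n P.1), (m - (2*j+1)) := by
    calc m ^ n = Fintype.card (Fin n → Fin m) := by
          rw [Fintype.card_fun, Fintype.card_fin, Fintype.card_fin]
      _ = ∑ P : {P : Finpartition (pmSet n) //
            IsSignedPartition n P ∧ 2 * pairsCount n P < m},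
            (Finset.univ.filter (fun f : Fin n → Fin m => Φ f = P)).card := by
          rw [← Finset.card_univ]
          exact Finset.card_eq_sum_card_fiberwise (fun f _ => Finset.mem_univ _)
      _ = _ := Finset.sum_congr rfl fun P _ => hfib P
  have hle : ∀ P : {P : Finpartition (pmSet n) //
      IsSignedPartition n P ∧ 2 * pairsCount n P < m},
      pairsCount n P.1 ∈ Finset.range (n+1) := by
    intro P
    rw [Finset.mem_range]
    have h1 : (NZ P.1).card ≤ P.1.parts.card := Finset.card_le_card (Finset.filter_subset _ _)
    have h2 : P.1.parts.card ≤ (pmSet n).card := P.1.card_parts_le_card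
    have h3 : (pmSet n).card = 2*n := card_pmSet n
    have h4 : pairsCount n P.1 = (NZ P.1).card / 2 := rfl
    omega
  have grp : (∑ P : {P : Finpartition (pmSet n) //
      IsSignedPartition n P ∧ 2 * pairsCount n P < m},
      ∏ j ∈ Finset.range (pairsCount n P.1), (m - (2*j+1)))
      = ∑ k ∈ Finset.range (n + 1), SB n k * ∏ j ∈ Finset.range k, (m - (2 * j + 1)) := by
    rw [← Finset.sum_fiberwise_of_maps_to (fun P _ => hle P)
      (fun P => ∏ j ∈ Finset.range (pairsCount n P.1), (m - (2*j+1)))]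
    apply Finset.sum_congr rfl
    intro k hk
    have hconst : ∀ P ∈ Finset.univ.filter (fun P : {P : Finpartition (pmSet n) //
        IsSignedPartition n P ∧ 2 * pairsCount n P < m} => pairsCount n P.1 = k),
        (∏ j ∈ Finset.range (pairsCount n P.1), (m - (2*j+1)))
          = ∏ j ∈ Finset.range k, (m - (2*j+1)) := by
      intro P hP
      rw [(Finset.mem_filter.mp hP).2]
    rw [Finset.sum_congr rfl hconst, Finset.sum_const, smul_eq_mul]
    by_cases hkm : 2*k < m
    · congr 1
      rw [← Fintype.card_subtype, SB, Nat.card_eq_fintype_card]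
      apply Fintype.card_congr
      refine (Equiv.subtypeSubtypeEquivSubtypeInter
        (fun P : Finpartition (pmSet n) => IsSignedPartition n P ∧ 2 * pairsCount n P < m)
        (fun P => pairsCount n P = k)).trans (Equiv.subtypeEquivRight ?_)
      intro P
      constructor
      · rintro ⟨⟨hsig, _⟩, hpc⟩
        refine ⟨hsig, ?_⟩
        have e1 := card_NZ_eq_two_mul hsig
        have e2 := pairsCount_eq_card_RS hsig
        show (NZ P).card = 2*k
        omega
      · rintro ⟨hsig, hcnz⟩
        have hcnz' : (NZ P).card = 2*k := hcnz
        have e1 := card_NZ_eq_two_mul hsig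
        have e2 := pairsCount_eq_card_RS hsig
        have hpck : pairsCount n P = k := by omega
        exact ⟨⟨hsig, by omega⟩, hpck⟩
    · have hW : (∏ j ∈ Finset.range k, (m - (2*j+1))) = 0 := by
        apply Finset.prod_eq_zero (Finset.mem_range.mpr (show t < k by omega))
        omega
      rw [hW, Nat.mul_zero, Nat.mul_zero]
  constructor
  · refine ⟨(Fintype.equivOfCardEq ?_).symm⟩
    rw [Fintype.card_sigma]
    have hpi : ∀ P : {P : Finpartition (pmSet n) //
        IsSignedPartition n P ∧ 2 * pairsCount n P < m},
        Fintype.card ((j : Fin (pairsCount n P.1)) → Fin (m - (2 * (j : ℕ) + 1)))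
          = ∏ j ∈ Finset.range (pairsCount n P.1), (m - (2*j+1)) := by
      intro P
      rw [Fintype.card_pi]
      rw [← Fin.prod_univ_eq_prod_range (fun j => m - (2*j+1)) (pairsCount n P.1)]
      apply Finset.prod_congr rfl
      intro j _
      rw [Fintype.card_fin]
    rw [Finset.sum_congr rfl (fun P _ => hpi P)]
    rw [← key, Fintype.card_fun, Fintype.card_fin, Fintype.card_fin]
  · rw [key, grp]
end
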